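/- arXiv:1002.3863 — 2 statements merged into one kernel-verified Lean document; each statement's English description precedes it below -/
import Mathlib

section
/- The map sending an unordered pair of distinct points {p,q} in ℙ^2 to the line pq is a locally trivial fibration B(2, ℙ^2) → (ℙ^2)^∨ over the dual projective plane, with fibre isomorphic to B(2, ℙ^1). -/
set_option maxHeartbeats 1000000


open CategoryTheory

/-- The singular chain complex with rational coefficients. -/
noncomputable def singularChainComplex : TopCat.{0} ⥤ ChainComplex (ModuleCat.{0} ℚ) ℕ :=
  TopCat.toSSet ⋙ ((SimplicialObject.whiskering _ _).obj (ModuleCat.free ℚ)) ⋙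
    AlgebraicTopology.alternatingFaceMapComplex _

/-- Singular homology with rational coefficients, as a functor. -/
noncomputable def singularHomologyFunctor (n : ℕ) : TopCat.{0} ⥤ ModuleCat.{0} ℚ :=
  singularChainComplex ⋙ HomologicalComplex.homologyFunctor _ _ n

/-- Singular homology of a space. -/
noncomputable abbrev SH (n : ℕ) (X : Type) [TopologicalSpace X] : ModuleCat.{0} ℚ :=
  (singularHomologyFunctor n).obj (TopCat.of X)

/-- The map induced on singular homology by a continuous map. -/
noncomputable def SHmap (n : ℕ) {X Y : Type} [TopologicalSpace X] [TopologicalSpace Y]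
    (f : C(X, Y)) : SH n X →ₗ[ℚ] SH n Y :=
  ((singularHomologyFunctor n).map (show TopCat.of X ⟶ TopCat.of Y from TopCat.ofHom f)).hom

/-- The unique map to the one point space. -/
def toPointMap (X : Type) [TopologicalSpace X] : C(X, PUnit) :=
  ⟨fun _ => PUnit.unit, continuous_const⟩

/-- Borel--Moore homology (with rational coefficients) of a (locally compact) space,
defined as the reduced singular homology of the one-point compactification, i.e. as the
kernel of the map induced by the collapse map to a point. -/
noncomputable def BM (n : ℕ) (X : Type) [TopologicalSpace X] :
    Submodule ℚ (SH n (OnePoint X)) :=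
  LinearMap.ker (SHmap n (toPointMap (OnePoint X)))
/-- The space of ordered configurations of `k` distinct points in `Z`. -/
def OrdConf (k : ℕ) (Z : Type) [TopologicalSpace Z] : Type :=
  {w : Fin k → Z // Function.Injective w}

instance (k : ℕ) (Z : Type) [TopologicalSpace Z] : TopologicalSpace (OrdConf k Z) :=
  instTopologicalSpaceSubtype

/-- Two ordered configurations are equivalent if they differ by a permutation. -/
def confSetoid (k : ℕ) (Z : Type) [TopologicalSpace Z] : Setoid (OrdConf k Z) where
  r w w' := ∃ σ : Equiv.Perm (Fin k), w.1 = w'.1 ∘ σ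
  iseqv := by
    refine ⟨fun w => ⟨1, rfl⟩, ?_, ?_⟩
    · rintro w w' ⟨σ, h⟩
      exact ⟨σ⁻¹, by funext x; simp [h]⟩
    · rintro w w' w'' ⟨σ, h⟩ ⟨τ, h'⟩
      exact ⟨τ * σ, by funext x; simp [h, h', Equiv.Perm.mul_apply]⟩

/-- The space `B(k,Z)` of unordered configurations of `k` distinct points in `Z`. -/
def UnordConf (k : ℕ) (Z : Type) [TopologicalSpace Z] : Type :=
  Quotient (confSetoid k Z)

instance (k : ℕ) (Z : Type) [TopologicalSpace Z] : TopologicalSpace (UnordConf k Z) :=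
  instTopologicalSpaceQuotient

/-- Two ordered configurations are evenly equivalent if they differ by an even permutation. -/
def evenConfSetoid (k : ℕ) (Z : Type) [TopologicalSpace Z] : Setoid (OrdConf k Z) where
  r w w' := ∃ σ : Equiv.Perm (Fin k), Equiv.Perm.sign σ = 1 ∧ w.1 = w'.1 ∘ σ
  iseqv := by
    refine ⟨fun w => ⟨1, by simp, rfl⟩, ?_, ?_⟩
    · rintro w w' ⟨σ, hσ, h⟩
      exact ⟨σ⁻¹, by simp [hσ], by funext x; simp [h]⟩
    · rintro w w' w'' ⟨σ, hσ, h⟩ ⟨τ, hτ, h'⟩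
      exact ⟨τ * σ, by simp [hσ, hτ], by funext x; simp [h, h', Equiv.Perm.mul_apply]⟩

/-- The orientation double cover of `B(k,Z)`: configurations up to even permutations. -/
def EvenConf (k : ℕ) (Z : Type) [TopologicalSpace Z] : Type :=
  Quotient (evenConfSetoid k Z)

instance (k : ℕ) (Z : Type) [TopologicalSpace Z] : TopologicalSpace (EvenConf k Z) :=
  instTopologicalSpaceQuotient

/-- An odd transposition in `Perm (Fin k)` for `k ≥ 2`. -/
def theSwap (k : ℕ) (hk : 2 ≤ k) : Equiv.Perm (Fin k) :=
  Equiv.swap ⟨0, by omega⟩ ⟨1, by omega⟩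

theorem theSwap_sign (k : ℕ) (hk : 2 ≤ k) : Equiv.Perm.sign (theSwap k hk) = -1 :=
  Equiv.Perm.sign_swap (by simp [Fin.ext_iff])

/-- The deck involution of the double cover `EvenConf k Z → UnordConf k Z`, induced by an
(arbitrary, odd) transposition. -/
def confSwap (k : ℕ) (Z : Type) [TopologicalSpace Z] (hk : 2 ≤ k) :
    EvenConf k Z → EvenConf k Z :=
  Quotient.map
    (fun w => ⟨w.1 ∘ theSwap k hk, w.2.comp (Equiv.injective _)⟩)
    (by
      rintro w w' ⟨σ, hσ, h⟩
      refine ⟨(theSwap k hk)⁻¹ * σ * theSwap k hk,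
        by simp [map_mul, map_inv, hσ, theSwap_sign k hk], ?_⟩
      funext x
      have h2 : ∀ y, w.1 y = w'.1 (σ y) := fun y => congrFun h y
      simp only [Function.comp_apply, Equiv.Perm.mul_apply, Equiv.Perm.inv_def,
        Equiv.apply_symm_apply]
      exact h2 _)

theorem confSwap_continuous (k : ℕ) (Z : Type) [TopologicalSpace Z] (hk : 2 ≤ k) :
    Continuous (confSwap k Z hk) := by
  apply Continuous.quotient_map'
  apply Continuous.subtype_mk
  exact continuous_pi fun i => (continuous_apply _).comp continuous_subtype_val

theorem confSwap_involutive (k : ℕ) (Z : Type) [TopologicalSpace Z] (hk : 2 ≤ k) :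
    Function.Involutive (confSwap k Z hk) := by
  intro x
  induction x using Quotient.ind
  apply Quotient.sound
  refine ⟨1, by simp, ?_⟩
  funext y
  simp [theSwap, Equiv.swap_apply_self]

/-- The deck involution as a homeomorphism. -/
def confSwapHomeo (k : ℕ) (Z : Type) [TopologicalSpace Z] (hk : 2 ≤ k) :
    EvenConf k Z ≃ₜ EvenConf k Z where
  toFun := confSwap k Z hk
  invFun := confSwap k Z hk
  left_inv := confSwap_involutive k Z hk
  right_inv := confSwap_involutive k Z hk
  continuous_toFun := confSwap_continuous k Z hk
  continuous_invFun := confSwap_continuous k Z hk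
/-- The deck involution extended to the one-point compactification. -/
noncomputable def onePointSwap (k : ℕ) (Z : Type) [TopologicalSpace Z] (hk : 2 ≤ k) :
    C(OnePoint (EvenConf k Z), OnePoint (EvenConf k Z)) :=
  ((Homeomorph.onePointCongr (confSwapHomeo k Z hk)) :
    C(OnePoint (EvenConf k Z), OnePoint (EvenConf k Z)))

/-- Borel--Moore homology of the unordered configuration space `B(k,Z)` with coefficients in
the rank-one sign local system `±ℚ`, realized as the anti-invariant part of the Borel--Moore
homology of the orientation double cover `EvenConf k Z` under the deck involution. -/
noncomputable def twistedBM (n k : ℕ) (Z : Type) [TopologicalSpace Z] (hk : 2 ≤ k) :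
    Submodule ℚ (SH n (OnePoint (EvenConf k Z))) :=
  BM n (EvenConf k Z) ⊓
    LinearMap.ker (SHmap n (onePointSwap k Z hk) + LinearMap.id)

/-- Complex projective `N`-space, as the topological quotient of the space of nonzero vectors
in `ℂ^{N+1}` by scaling. -/
def projSetoid (N : ℕ) : Setoid {v : Fin (N + 1) → ℂ // v ≠ 0} where
  r v w := ∃ c : ℂ, c ≠ 0 ∧ w.1 = c • v.1
  iseqv := by
    refine ⟨fun v => ⟨1, one_ne_zero, by simp⟩, ?_, ?_⟩
    · rintro v w ⟨c, hc, h⟩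
      exact ⟨c⁻¹, inv_ne_zero hc, by rw [h, smul_smul, inv_mul_cancel₀ hc, one_smul]⟩
    · rintro u v w ⟨c, hc, h⟩ ⟨d, hd, h'⟩
      exact ⟨d * c, mul_ne_zero hd hc, by rw [h', h, smul_smul]⟩

def ProjSpace (N : ℕ) : Type := Quotient (projSetoid N)

noncomputable instance (N : ℕ) : TopologicalSpace (ProjSpace N) := instTopologicalSpaceQuotient

/-- The point of projective space determined by a nonzero vector. -/
def ProjSpace.mk {N : ℕ} (v : Fin (N + 1) → ℂ) (h : v ≠ 0) : ProjSpace N :=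
  Quotient.mk (projSetoid N) ⟨v, h⟩


noncomputable section
namespace B2P2
open scoped Classical


/-- dot product on ℂ^n. -/
def dot3 {n : ℕ} (a b : Fin n → ℂ) : ℂ := ∑ i, a i * b i

def cross (a b : Fin 3 → ℂ) : Fin 3 → ℂ :=
  ![a 1 * b 2 - a 2 * b 1, a 2 * b 0 - a 0 * b 2, a 0 * b 1 - a 1 * b 0]

lemma dot3_eq (a b : Fin 3 → ℂ) : dot3 a b = a 0 * b 0 + a 1 * b 1 + a 2 * b 2 := by
  simp [dot3, Fin.sum_univ_three]

lemma dot2_eq (a b : Fin 2 → ℂ) : dot3 a b = a 0 * b 0 + a 1 * b 1 := by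
  simp [dot3, Fin.sum_univ_two]

lemma dot3_comm (a b : Fin 3 → ℂ) : dot3 a b = dot3 b a := by
  simp only [dot3_eq]; ring

lemma cross_apply (a b : Fin 3 → ℂ) (i : Fin 3) :
    cross a b i = ![a 1 * b 2 - a 2 * b 1, a 2 * b 0 - a 0 * b 2, a 0 * b 1 - a 1 * b 0] i := rfl

lemma dot3_cross_left (a b : Fin 3 → ℂ) : dot3 (cross a b) a = 0 := by
  simp [dot3_eq, cross]; ring

lemma dot3_cross_right (a b : Fin 3 → ℂ) : dot3 (cross a b) b = 0 := by
  simp [dot3_eq, cross]; ring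

lemma cross_smul_left (c : ℂ) (a b : Fin 3 → ℂ) : cross (c • a) b = c • cross a b := by
  funext i; fin_cases i <;> simp [cross] <;> ring

lemma cross_smul_right (c : ℂ) (a b : Fin 3 → ℂ) : cross a (c • b) = c • cross a b := by
  funext i; fin_cases i <;> simp [cross] <;> ring

lemma cross_anticomm (a b : Fin 3 → ℂ) : cross a b = -cross b a := by
  funext i; fin_cases i <;> simp [cross] <;> ring

/-- Triple products. -/
lemma dot3_cross_comm (u w₁ w₂ : Fin 3 → ℂ) :
    dot3 w₂ (cross u w₁) = dot3 u (cross w₁ w₂) := by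
  simp [dot3_eq, cross]; ring


lemma fin3_cases (j : Fin 3) : j = 0 ∨ j = 1 ∨ j = 2 := by omega

lemma fin2_cases (j : Fin 2) : j = 0 ∨ j = 1 := by omega

/-- If `a ≠ 0` and `cross a b = 0` then `b` is a multiple of `a`. -/
lemma cross_eq_zero_dep {a b : Fin 3 → ℂ} (ha : a ≠ 0) (hb : b ≠ 0)
    (h : cross a b = 0) : ∃ c : ℂ, c ≠ 0 ∧ b = c • a := by
  have h0 := congrFun h 0
  have h1 := congrFun h 1
  have h2 := congrFun h 2
  simp [cross, sub_eq_zero] at h0 h1 h2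
  have key : ∀ j k : Fin 3, a j * b k = a k * b j := by
    intro j k
    rcases fin3_cases j with hj | hj | hj <;> rcases fin3_cases k with hk | hk | hk <;>
      subst hj <;> subst hk <;>
      first
        | rfl
        | exact h0
        | exact h0.symm
        | exact h1
        | exact h1.symm
        | exact h2
        | exact h2.symm
  obtain ⟨i, hi⟩ := Function.ne_iff.1 ha
  simp only [Pi.zero_apply] at hi
  have hbi : b i ≠ 0 := by
    intro hz
    apply hb
    funext j
    have hk := key i j
    rw [hz, mul_zero] at hk
    rcases mul_eq_zero.1 hk with h' | h'
    · exact absurd h' hi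
    · exact h'
  refine ⟨b i / a i, div_ne_zero hbi hi, ?_⟩
  funext j
  have := key i j
  rw [Pi.smul_apply, smul_eq_mul, div_mul_eq_mul_div, eq_div_iff hi]
  linear_combination this

/-- 2x2 determinant. -/
def det2 (s t : Fin 2 → ℂ) : ℂ := s 0 * t 1 - s 1 * t 0

/-- Projection-from-a-point map on vectors: coordinates of `p` along the pencil dual to
`w₁, w₂`. -/
def psiv (w₁ w₂ p : Fin 3 → ℂ) : Fin 2 → ℂ := ![dot3 w₂ p, -(dot3 w₁ p)]

/-- Parametrization of the line `u = 0` by `ℙ¹`. -/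
def phiv (w₁ w₂ u : Fin 3 → ℂ) (st : Fin 2 → ℂ) : Fin 3 → ℂ :=
  st 0 • cross u w₁ + st 1 • cross u w₂

lemma identA (w₁ w₂ u p : Fin 3 → ℂ) :
    phiv w₁ w₂ u (psiv w₁ w₂ p) =
      dot3 u (cross w₁ w₂) • p - dot3 u p • cross w₁ w₂ := by
  funext i
  fin_cases i <;> simp [phiv, psiv, cross, dot3_eq] <;> ring

lemma identB (w₁ w₂ u : Fin 3 → ℂ) (st : Fin 2 → ℂ) :
    psiv w₁ w₂ (phiv w₁ w₂ u st) = dot3 u (cross w₁ w₂) • st := by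
  funext i
  fin_cases i <;> simp [phiv, psiv, cross, dot3_eq] <;> ring

lemma identC (w₁ w₂ u : Fin 3 → ℂ) (s t : Fin 2 → ℂ) :
    cross (phiv w₁ w₂ u s) (phiv w₁ w₂ u t) =
      (dot3 u (cross w₁ w₂) * det2 s t) • u := by
  funext i
  fin_cases i <;> simp [phiv, psiv, cross, dot3_eq, det2] <;> ring

lemma identD (w₁ w₂ a b : Fin 3 → ℂ) :
    det2 (psiv w₁ w₂ a) (psiv w₁ w₂ b) = dot3 (cross w₁ w₂) (cross a b) := by
  simp [det2, psiv, dot3_eq, cross]; ring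

lemma dot3_phiv (w₁ w₂ u : Fin 3 → ℂ) (st : Fin 2 → ℂ) :
    dot3 u (phiv w₁ w₂ u st) = 0 := by
  simp [phiv, dot3_eq, cross]; ring

lemma dot3_smul_right (c : ℂ) (a b : Fin 3 → ℂ) : dot3 a (c • b) = c * dot3 a b := by
  simp [dot3_eq]; ring

lemma dot3_smul_left {n : ℕ} (c : ℂ) (a b : Fin n → ℂ) : dot3 (c • a) b = c * dot3 a b := by
  simp only [dot3, Finset.mul_sum, Pi.smul_apply, smul_eq_mul]
  exact Finset.sum_congr rfl fun i _ => by ring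

lemma psiv_smul (w₁ w₂ : Fin 3 → ℂ) (c : ℂ) (p : Fin 3 → ℂ) :
    psiv w₁ w₂ (c • p) = c • psiv w₁ w₂ p := by
  funext i
  fin_cases i <;> simp [psiv, dot3_eq] <;> ring

lemma phiv_smul_left (w₁ w₂ : Fin 3 → ℂ) (c : ℂ) (u : Fin 3 → ℂ) (st : Fin 2 → ℂ) :
    phiv w₁ w₂ (c • u) st = c • phiv w₁ w₂ u st := by
  funext i
  fin_cases i <;> simp [phiv, cross] <;> ring

lemma phiv_smul_right (w₁ w₂ : Fin 3 → ℂ) (c : ℂ) (u : Fin 3 → ℂ) (st : Fin 2 → ℂ) :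
    phiv w₁ w₂ u (c • st) = c • phiv w₁ w₂ u st := by
  funext i
  fin_cases i <;> simp [phiv, cross] <;> ring

/-- Key nondegeneracy: if `p` is orthogonal to `u` and `ψ p = 0`, and `u·(w₁×w₂) ≠ 0`,
then `p = 0`. -/
lemma psiv_ne_zero {w₁ w₂ u p : Fin 3 → ℂ} (hd : dot3 u (cross w₁ w₂) ≠ 0)
    (hup : dot3 u p = 0) (hp : p ≠ 0) : psiv w₁ w₂ p ≠ 0 := by
  intro h0
  apply hp
  have hA := identA w₁ w₂ u p
  rw [h0] at hA
  have : phiv w₁ w₂ u 0 = 0 := by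
    funext i; simp [phiv]
  rw [this, hup, zero_smul, sub_zero] at hA
  have := hA.symm
  funext i
  have := congrFun this i
  simp only [Pi.smul_apply, smul_eq_mul, Pi.zero_apply] at this ⊢
  exact (mul_eq_zero.1 this).resolve_left hd

/-- Fin 2 dependence from vanishing determinant. -/
lemma det2_eq_zero_dep {s t : Fin 2 → ℂ} (hs : s ≠ 0) (ht : t ≠ 0)
    (h : det2 s t = 0) : ∃ c : ℂ, c ≠ 0 ∧ t = c • s := by
  have key : ∀ j k : Fin 2, s j * t k = s k * t j := by
    intro j k
    rcases fin2_cases j with hj | hj <;> rcases fin2_cases k with hk | hk <;>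
      subst hj <;> subst hk <;>
      first
        | rfl
        | (simp only [det2] at h; linear_combination h)
        | (simp only [det2] at h; linear_combination -h)
  obtain ⟨i, hi⟩ := Function.ne_iff.1 hs
  simp only [Pi.zero_apply] at hi
  have hti : t i ≠ 0 := by
    intro hz
    apply ht
    funext j
    have hk := key i j
    rw [hz, mul_zero] at hk
    rcases mul_eq_zero.1 hk with h' | h'
    · exact absurd h' hi
    · exact h'
  refine ⟨t i / s i, div_ne_zero hti hi, ?_⟩
  funext j
  have := key i j
  rw [Pi.smul_apply, smul_eq_mul, div_mul_eq_mul_div, eq_div_iff hi]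
  linear_combination this

lemma det2_smul_left (c : ℂ) (s t : Fin 2 → ℂ) : det2 (c • s) t = c * det2 s t := by
  simp [det2]; ring

lemma det2_smul_right (c : ℂ) (s t : Fin 2 → ℂ) : det2 s (c • t) = c * det2 s t := by
  simp [det2]; ring

lemma det2_dep (c : ℂ) (s : Fin 2 → ℂ) : det2 s (c • s) = 0 := by
  simp [det2]; ring

lemma cross_dep (c : ℂ) (a : Fin 3 → ℂ) : cross a (c • a) = 0 := by
  funext i; fin_cases i <;> simp [cross] <;> ring

section Topology
open Topology

variable {N : ℕ} {Z : Type} [TopologicalSpace Z]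

abbrev NZ (N : ℕ) := {v : Fin (N + 1) → ℂ // v ≠ 0}

/-- The projective quotient map. -/
def pQ (N : ℕ) : NZ N → ProjSpace N := Quotient.mk (projSetoid N)

lemma pQ_eq_iff (a b : NZ N) : pQ N a = pQ N b ↔ ∃ c : ℂ, c ≠ 0 ∧ b.1 = c • a.1 := by
  constructor
  · intro h
    exact Quotient.exact h
  · intro h
    exact Quotient.sound h

/-- Scaling homeomorphism on nonzero vectors. -/
def scl (N : ℕ) (c : ℂˣ) : NZ N ≃ₜ NZ N where
  toFun v := ⟨(c : ℂ) • v.1, smul_ne_zero c.ne_zero v.2⟩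
  invFun v := ⟨((c⁻¹ : ℂˣ) : ℂ) • v.1, smul_ne_zero c⁻¹.ne_zero v.2⟩
  left_inv v := by
    ext : 1
    simp [smul_smul]
  right_inv v := by
    ext : 1
    simp [smul_smul]
  continuous_toFun := by
    apply Continuous.subtype_mk
    exact continuous_subtype_val.const_smul (c : ℂ)
  continuous_invFun := by
    apply Continuous.subtype_mk
    exact continuous_subtype_val.const_smul ((c⁻¹ : ℂˣ) : ℂ)

lemma isOpenQuotientMap_pQ (N : ℕ) : IsOpenQuotientMap (pQ N) := by
  refine ⟨Quotient.mk_surjective, continuous_quotient_mk', ?_⟩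
  intro V hV
  show IsOpen (pQ N ⁻¹' (pQ N '' V))
  have key : pQ N ⁻¹' (pQ N '' V) = ⋃ c : ℂˣ, (scl N c) '' V := by
    ext x
    simp only [Set.mem_preimage, Set.mem_image, Set.mem_iUnion]
    constructor
    · rintro ⟨v, hv, hvx⟩
      obtain ⟨c, hc, hcx⟩ := (pQ_eq_iff v x).1 hvx
      refine ⟨Units.mk0 c hc, v, hv, ?_⟩
      apply Subtype.ext
      exact hcx.symm
    · rintro ⟨c, v, hv, rfl⟩
      exact ⟨v, hv, (pQ_eq_iff v _).2 ⟨(c : ℂ), c.ne_zero, rfl⟩⟩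
  exact key ▸ isOpen_iUnion fun c => (scl N c).isOpenMap V hV

/-- The unordered configuration quotient map. -/
def cQ (k : ℕ) (Z : Type) [TopologicalSpace Z] : OrdConf k Z → UnordConf k Z :=
  Quotient.mk (confSetoid k Z)

/-- Permutation homeomorphism of ordered configurations. -/
def permHomeo (k : ℕ) (Z : Type) [TopologicalSpace Z] (σ : Equiv.Perm (Fin k)) :
    OrdConf k Z ≃ₜ OrdConf k Z where
  toFun w := ⟨w.1 ∘ σ, w.2.comp σ.injective⟩
  invFun w := ⟨w.1 ∘ ⇑(σ⁻¹), w.2.comp (σ⁻¹).injective⟩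
  left_inv w := by
    apply Subtype.ext
    funext i
    simp
  right_inv w := by
    apply Subtype.ext
    funext i
    simp
  continuous_toFun := by
    apply Continuous.subtype_mk
    exact continuous_pi fun i => (continuous_apply _).comp continuous_subtype_val
  continuous_invFun := by
    apply Continuous.subtype_mk
    exact continuous_pi fun i => (continuous_apply _).comp continuous_subtype_val

lemma isOpenQuotientMap_cQ (k : ℕ) (Z : Type) [TopologicalSpace Z] :
    IsOpenQuotientMap (cQ k Z) := by
  refine ⟨Quotient.mk_surjective, continuous_quotient_mk', ?_⟩
  intro V hV
  show IsOpen (cQ k Z ⁻¹' (cQ k Z '' V))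
  have key : cQ k Z ⁻¹' (cQ k Z '' V) = ⋃ σ : Equiv.Perm (Fin k), (permHomeo k Z σ) '' V := by
    ext x
    simp only [Set.mem_preimage, Set.mem_image, Set.mem_iUnion]
    constructor
    · rintro ⟨v, hv, hvx⟩
      obtain ⟨σ, hσ⟩ := Quotient.exact hvx
      refine ⟨σ⁻¹, v, hv, ?_⟩
      apply Subtype.ext
      funext i
      show v.1 (σ⁻¹ i) = x.1 i
      rw [congrFun hσ (σ⁻¹ i)]
      simp
    · rintro ⟨σ, v, hv, rfl⟩
      exact ⟨v, hv, Quotient.sound ⟨σ⁻¹, funext fun i => by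
        show v.1 i = v.1 (σ (σ⁻¹ i)); simp⟩⟩
  exact key ▸ isOpen_iUnion fun σ => (permHomeo k Z σ).isOpenMap V hV

lemma openQuotRestrict {X Y : Type} [TopologicalSpace X] [TopologicalSpace Y]
    {f : X → Y} (hf : IsOpenQuotientMap f) {U : Set Y} (hU : IsOpen U) :
    IsOpenQuotientMap (U.restrictPreimage f) :=
  IsOpenQuotientMap.iff_isOpenMap_isQuotientMap.2
    ⟨hf.isOpenMap.restrictPreimage U, hf.isQuotientMap.restrictPreimage_isOpen hU⟩

/-- Distinct pairs. -/
abbrev DP (Z : Type) [TopologicalSpace Z] := {p : Z × Z // p.1 ≠ p.2}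

/-- Distinct pairs are homeomorphic to ordered 2-configurations. -/
def dpHomeo (Z : Type) [TopologicalSpace Z] : DP Z ≃ₜ OrdConf 2 Z where
  toFun p := ⟨![p.1.1, p.1.2], by
    intro a b hab
    rcases fin2_cases a with ha | ha <;> rcases fin2_cases b with hb | hb <;>
      subst ha <;> subst hb <;>
      first
        | rfl
        | (exfalso; apply p.2; simpa using hab)
        | (exfalso; apply p.2; simpa using hab.symm)⟩
  invFun w := ⟨(w.1 0, w.1 1), fun h => absurd (w.2 h) (by decide)⟩
  left_inv p := Subtype.ext rfl
  right_inv w := by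
    apply Subtype.ext
    funext i
    rcases fin2_cases i with hi | hi <;> subst hi <;> rfl
  continuous_toFun := by
    apply Continuous.subtype_mk
    refine continuous_pi fun i => ?_
    rcases fin2_cases i with hi | hi <;> subst hi <;>
      simp only [Matrix.cons_val_zero, Matrix.cons_val_one, Matrix.head_cons]
    · exact continuous_fst.comp continuous_subtype_val
    · exact continuous_snd.comp continuous_subtype_val
  continuous_invFun := by
    apply Continuous.subtype_mk
    exact ((continuous_apply 0).comp continuous_subtype_val).prodMk
      ((continuous_apply 1).comp continuous_subtype_val)

end Topology

section LineMap

/-- A junk point of projective space. -/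
def junkP (N : ℕ) : ProjSpace N := pQ N ⟨fun _ => 1, fun h => one_ne_zero (congrFun h 0)⟩

lemma pQ_eq_iff_cross (a b : NZ 2) : pQ 2 a = pQ 2 b ↔ cross a.1 b.1 = 0 := by
  constructor
  · intro h
    obtain ⟨c, hc, hcx⟩ := (pQ_eq_iff a b).1 h
    rw [hcx]
    exact cross_dep c a.1
  · intro h
    obtain ⟨c, hc, hcx⟩ := cross_eq_zero_dep a.2 b.2 h
    exact (pQ_eq_iff a b).2 ⟨c, hc, hcx⟩

/-- The line through two points of `ℙ²`, given by the cross product (junk for equal points). -/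
def linePair : ProjSpace 2 → ProjSpace 2 → ProjSpace 2 :=
  Quotient.lift₂
    (fun a b => if h : cross a.1 b.1 = 0 then junkP 2 else pQ 2 ⟨cross a.1 b.1, h⟩)
    (by
      rintro a b a' b' ⟨c, hc, hca⟩ ⟨d, hd, hdb⟩
      have hcross : cross a'.1 b'.1 = (c * d) • cross a.1 b.1 := by
        rw [hca, hdb, cross_smul_left, cross_smul_right, smul_smul, mul_comm]
      by_cases h : cross a.1 b.1 = 0
      · rw [dif_pos h, dif_pos (by rw [hcross, h, smul_zero])]
      · rw [dif_neg h, dif_neg (by rw [hcross]; exact smul_ne_zero (mul_ne_zero hc hd) h)]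
        exact (pQ_eq_iff _ _).2 ⟨c * d, mul_ne_zero hc hd, hcross⟩)

lemma linePair_mk (a b : NZ 2) (h : cross a.1 b.1 ≠ 0) :
    linePair (pQ 2 a) (pQ 2 b) = pQ 2 ⟨cross a.1 b.1, h⟩ := by
  show dite _ _ _ = _
  rw [dif_neg h]

lemma linePair_comm (x y : ProjSpace 2) : linePair x y = linePair y x := by
  induction x using Quotient.ind
  induction y using Quotient.ind
  rename_i a b
  show dite _ _ _ = dite _ _ _
  by_cases h : cross a.1 b.1 = 0
  · rw [dif_pos h, dif_pos (by rw [cross_anticomm, h, neg_zero])]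
  · have h' : cross b.1 a.1 ≠ 0 := by
      rw [cross_anticomm]
      simpa using h
    rw [dif_neg h, dif_neg h']
    refine (pQ_eq_iff _ _).2 ⟨-1, by norm_num, ?_⟩
    show cross b.1 a.1 = (-1 : ℂ) • cross a.1 b.1
    rw [cross_anticomm b.1 a.1]
    funext i
    simp

/-- Every permutation of `Fin 2` is the identity or the swap. -/
lemma perm_fin2 (σ : Equiv.Perm (Fin 2)) :
    (σ 0 = 0 ∧ σ 1 = 1) ∨ (σ 0 = 1 ∧ σ 1 = 0) := by
  rcases fin2_cases (σ 0) with h0 | h0 <;> rcases fin2_cases (σ 1) with h1 | h1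
  · exact absurd (σ.injective (h0.trans h1.symm)) (by decide)
  · exact Or.inl ⟨h0, h1⟩
  · exact Or.inr ⟨h0, h1⟩
  · exact absurd (σ.injective (h0.trans h1.symm)) (by decide)

/-- The line map on ordered configurations. -/
def lineOrd : OrdConf 2 (ProjSpace 2) → ProjSpace 2 := fun w => linePair (w.1 0) (w.1 1)

/-- The line map `π₀ : B(2,ℙ²) → (ℙ²)ᵛ`. -/
def lineU : UnordConf 2 (ProjSpace 2) → ProjSpace 2 :=
  Quotient.lift lineOrd
    (by
      rintro w w' ⟨σ, hσ⟩
      show linePair (w.1 0) (w.1 1) = linePair (w'.1 0) (w'.1 1)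
      rcases perm_fin2 σ with ⟨h0, h1⟩ | ⟨h0, h1⟩
      · rw [congrFun hσ 0, congrFun hσ 1]
        simp only [Function.comp_apply, h0, h1]
      · rw [congrFun hσ 0, congrFun hσ 1]
        simp only [Function.comp_apply, h0, h1]
        exact linePair_comm _ _)

lemma lineU_mk (a b : NZ 2) (hi : Function.Injective ![pQ 2 a, pQ 2 b])
    (h : cross a.1 b.1 ≠ 0) :
    lineU (cQ 2 (ProjSpace 2) ⟨![pQ 2 a, pQ 2 b], hi⟩) = pQ 2 ⟨cross a.1 b.1, h⟩ := by
  show lineOrd _ = _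
  show linePair (pQ 2 a) (pQ 2 b) = _
  exact linePair_mk a b h

lemma continuous_crossNZ : Continuous fun p : NZ 2 × NZ 2 => cross p.1.1 p.2.1 := by
  refine continuous_pi fun i => ?_
  have c1 : ∀ j : Fin 3, Continuous fun p : NZ 2 × NZ 2 => p.1.1 j := fun j =>
    (continuous_apply j).comp (continuous_subtype_val.comp continuous_fst)
  have c2 : ∀ j : Fin 3, Continuous fun p : NZ 2 × NZ 2 => p.2.1 j := fun j =>
    (continuous_apply j).comp (continuous_subtype_val.comp continuous_snd)
  fin_cases i <;>
    simp only [cross, Matrix.cons_val_zero, Matrix.cons_val_one, Matrix.head_cons,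
      Matrix.cons_val_two, Matrix.tail_cons] <;>
    exact ((c1 _).mul (c2 _)).sub ((c1 _).mul (c2 _))

/-- The set of distinct pairs in `ℙ² × ℙ²`. -/
def Sdist : Set (ProjSpace 2 × ProjSpace 2) := {p | p.1 ≠ p.2}

lemma preimage_Sdist :
    Prod.map (pQ 2) (pQ 2) ⁻¹' Sdist = {p : NZ 2 × NZ 2 | cross p.1.1 p.2.1 ≠ 0} := by
  ext p
  simp only [Set.mem_preimage, Sdist, Set.mem_setOf_eq, Prod.map]
  exact not_congr (pQ_eq_iff_cross p.1 p.2)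

lemma isOpen_Sdist : IsOpen Sdist := by
  rw [← ((isOpenQuotientMap_pQ 2).prodMap (isOpenQuotientMap_pQ 2)).isQuotientMap.isOpen_preimage]
  rw [preimage_Sdist]
  exact isOpen_compl_iff.mpr (isClosed_singleton.preimage continuous_crossNZ) |>.mono le_rfl

/-- Homeomorphisms are open quotient maps. -/
lemma homeoOpenQuot {X Y : Type} [TopologicalSpace X] [TopologicalSpace Y]
    (h : X ≃ₜ Y) : IsOpenQuotientMap h :=
  ⟨h.surjective, h.continuous, h.isOpenMap⟩

/-- The combined open quotient map from pairs of independent vectors onto `OrdConf 2 ℙ²`. -/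
def ordQ : (Prod.map (pQ 2) (pQ 2) ⁻¹' Sdist) → OrdConf 2 (ProjSpace 2) :=
  (dpHomeo (ProjSpace 2)) ∘ (Sdist.restrictPreimage (Prod.map (pQ 2) (pQ 2)))

lemma isOpenQuotientMap_ordQ : IsOpenQuotientMap ordQ :=
  (homeoOpenQuot _).comp
    (openQuotRestrict ((isOpenQuotientMap_pQ 2).prodMap (isOpenQuotientMap_pQ 2)) isOpen_Sdist)

lemma ordQ_cross_ne (x : (Prod.map (pQ 2) (pQ 2) ⁻¹' Sdist)) :
    cross x.1.1.1 x.1.2.1 ≠ 0 := by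
  exact (Set.ext_iff.1 preimage_Sdist x.1).1 x.2

lemma continuous_lineOrd : Continuous lineOrd := by
  rw [← isOpenQuotientMap_ordQ.continuous_comp_iff]
  have heq : lineOrd ∘ ordQ =
      pQ 2 ∘ fun x : (Prod.map (pQ 2) (pQ 2) ⁻¹' Sdist) =>
        (⟨cross x.1.1.1 x.1.2.1, ordQ_cross_ne x⟩ : NZ 2) := by
    funext x
    show linePair (pQ 2 x.1.1) (pQ 2 x.1.2) = _
    exact linePair_mk _ _ (ordQ_cross_ne x)
  rw [heq]
  exact (isOpenQuotientMap_pQ 2).continuous.comp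
    (Continuous.subtype_mk (continuous_crossNZ.comp continuous_subtype_val) _)

lemma continuous_lineU : Continuous lineU := by
  rw [← (isOpenQuotientMap_cQ 2 (ProjSpace 2)).continuous_comp_iff]
  exact continuous_lineOrd

end LineMap


section Trivialization

/-- Distinctness in `ℙ¹` is detected by the determinant. -/
lemma pQ1_eq_iff_det2 (s t : NZ 1) : pQ 1 s = pQ 1 t ↔ det2 s.1 t.1 = 0 := by
  constructor
  · intro h
    obtain ⟨c, hc, hcx⟩ := (pQ_eq_iff s t).1 h
    rw [hcx]
    exact det2_dep c s.1
  · intro h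
    obtain ⟨c, hc, hcx⟩ := det2_eq_zero_dep s.2 t.2 h
    exact (pQ_eq_iff s t).2 ⟨c, hc, hcx⟩

lemma inj_pair {Z : Type} {x y : Z} (h : x ≠ y) : Function.Injective ![x, y] := by
  intro a b hab
  rcases fin2_cases a with ha | ha <;> rcases fin2_cases b with hb | hb <;>
    subst ha <;> subst hb <;>
    first
      | rfl
      | (exfalso; apply h; simpa using hab)
      | (exfalso; apply h; simpa using hab.symm)

lemma pair_ne {Z : Type} {x y : Z} (h : Function.Injective ![x, y]) : x ≠ y := by
  intro he
  have : ![x, y] 0 = ![x, y] 1 := by simpa using he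
  exact absurd (h this) (by decide)

/-- Junk unordered configurations. -/
def junkC (N : ℕ) : UnordConf 2 (ProjSpace (N + 1)) :=
  cQ 2 (ProjSpace (N + 1))
    ⟨![pQ (N + 1) ⟨fun i => if i = 0 then 1 else 0, fun hz => by
          have h0 := congrFun hz 0
          simp only [if_pos rfl, Pi.zero_apply] at h0
          exact one_ne_zero h0⟩,
       pQ (N + 1) ⟨fun i => if i = 1 then 1 else 0, fun hz => by
          have h1 := congrFun hz 1
          simp only [if_pos rfl, Pi.zero_apply] at h1
          exact one_ne_zero h1⟩],
      inj_pair (by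
        intro h
        obtain ⟨c, hc, hcx⟩ := (pQ_eq_iff _ _).1 h
        have h10 : ¬((1 : Fin (N + 2)) = 0) := by simp [Fin.one_eq_zero_iff]
        have h1 := congrFun hcx 1
        simp [h10] at h1)⟩

lemma cQ_congr {Z : Type} [TopologicalSpace Z] {v v' : OrdConf 2 Z} (h : v.1 = v'.1) :
    cQ 2 Z v = cQ 2 Z v' := by
  congr 1
  exact Subtype.ext h

/-- Map an unordered configuration along `f`, with a junk value when injectivity fails. -/
def confMap {Y Z : Type} [TopologicalSpace Y] [TopologicalSpace Z] (f : Y → Z)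
    (junk : UnordConf 2 Z) : UnordConf 2 Y → UnordConf 2 Z :=
  Quotient.lift
    (fun w => if h : Function.Injective (f ∘ w.1) then cQ 2 Z ⟨f ∘ w.1, h⟩ else junk)
    (by
      rintro w w' ⟨σ, hσ⟩
      have hcomp : f ∘ w.1 = (f ∘ w'.1) ∘ σ := by
        rw [hσ]
        rfl
      by_cases h : Function.Injective (f ∘ w'.1)
      · rw [dif_pos (by rw [hcomp]; exact h.comp σ.injective), dif_pos h]
        exact Quotient.sound ⟨σ, hcomp⟩
      · rw [dif_neg (by rw [hcomp]; exact fun hi => h (by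
          have := hi.comp σ.symm.injective
          convert this using 1
          funext i
          simp)), dif_neg h])

lemma confMap_mk {Y Z : Type} [TopologicalSpace Y] [TopologicalSpace Z] (f : Y → Z)
    (junk : UnordConf 2 Z) (w : OrdConf 2 Y) (h : Function.Injective (f ∘ w.1)) :
    confMap f junk (cQ 2 Y w) = cQ 2 Z ⟨f ∘ w.1, h⟩ := by
  show (if h : Function.Injective (f ∘ w.1) then cQ 2 Z ⟨f ∘ w.1, h⟩ else junk) = _
  rw [dif_pos h]

lemma confMap_mk_pair {Y Z : Type} [TopologicalSpace Y] [TopologicalSpace Z] (f : Y → Z)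
    (junk : UnordConf 2 Z) (x y : Y) (h : Function.Injective ![x, y]) {X X' : Z}
    (hX : f x = X) (hY : f y = X') (hXY : X ≠ X') :
    confMap f junk (cQ 2 Y ⟨![x, y], h⟩) = cQ 2 Z ⟨![X, X'], inj_pair hXY⟩ := by
  have hcomp : f ∘ ![x, y] = ![X, X'] := by
    funext i
    rcases fin2_cases i with hi | hi <;> subst hi
    · exact hX
    · exact hY
  have hinj : Function.Injective (f ∘ ![x, y]) := by
    rw [hcomp]
    exact inj_pair hXY
  rw [confMap_mk f junk ⟨![x, y], h⟩ hinj]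
  exact cQ_congr hcomp

variable (w₁ w₂ : Fin 3 → ℂ)

/-- The projection from the point `[w₁ × w₂]`, as a map `ℙ² → ℙ¹` (junk at the center). -/
def psiP : ProjSpace 2 → ProjSpace 1 :=
  Quotient.lift
    (fun p : NZ 2 => if h : psiv w₁ w₂ p.1 = 0 then junkP 1 else pQ 1 ⟨psiv w₁ w₂ p.1, h⟩)
    (by
      rintro p p' ⟨c, hc, hcx⟩
      have hps : psiv w₁ w₂ p'.1 = c • psiv w₁ w₂ p.1 := by rw [hcx, psiv_smul]
      by_cases h : psiv w₁ w₂ p.1 = 0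
      · rw [dif_pos h, dif_pos (by rw [hps, h, smul_zero])]
      · rw [dif_neg h, dif_neg (by rw [hps]; exact smul_ne_zero hc h)]
        exact (pQ_eq_iff _ _).2 ⟨c, hc, hps⟩)

lemma psiP_mk (p : NZ 2) (h : psiv w₁ w₂ p.1 ≠ 0) :
    psiP w₁ w₂ (pQ 2 p) = pQ 1 ⟨psiv w₁ w₂ p.1, h⟩ := by
  show dite _ _ _ = _
  rw [dif_neg h]

/-- Parametrization of the line `[u]` by `ℙ¹` (junk where undefined). -/
def phiP (u : NZ 2) : ProjSpace 1 → ProjSpace 2 :=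
  Quotient.lift
    (fun st : NZ 1 =>
      if h : phiv w₁ w₂ u.1 st.1 = 0 then junkP 2 else pQ 2 ⟨phiv w₁ w₂ u.1 st.1, h⟩)
    (by
      rintro s s' ⟨c, hc, hcx⟩
      have hph : phiv w₁ w₂ u.1 s'.1 = c • phiv w₁ w₂ u.1 s.1 := by
        rw [hcx, phiv_smul_right]
      by_cases h : phiv w₁ w₂ u.1 s.1 = 0
      · rw [dif_pos h, dif_pos (by rw [hph, h, smul_zero])]
      · rw [dif_neg h, dif_neg (by rw [hph]; exact smul_ne_zero hc h)]
        exact (pQ_eq_iff _ _).2 ⟨c, hc, hph⟩)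

lemma phiP_mk (u : NZ 2) (st : NZ 1) (h : phiv w₁ w₂ u.1 st.1 ≠ 0) :
    phiP w₁ w₂ u (pQ 1 st) = pQ 2 ⟨phiv w₁ w₂ u.1 st.1, h⟩ := by
  show dite _ _ _ = _
  rw [dif_neg h]

lemma phiP_scale (u u' : NZ 2) (c : ℂ) (hc : c ≠ 0) (hcx : u'.1 = c • u.1) :
    phiP w₁ w₂ u = phiP w₁ w₂ u' := by
  funext x
  induction x using Quotient.ind
  rename_i st
  show dite _ _ _ = dite _ _ _
  have hph : phiv w₁ w₂ u'.1 st.1 = c • phiv w₁ w₂ u.1 st.1 := by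
    rw [hcx, phiv_smul_left]
  by_cases h : phiv w₁ w₂ u.1 st.1 = 0
  · rw [dif_pos h, dif_pos (by rw [hph, h, smul_zero])]
  · rw [dif_neg h, dif_neg (by rw [hph]; exact smul_ne_zero hc h)]
    exact (pQ_eq_iff _ _).2 ⟨c, hc, hph⟩

/-- The fibrewise parametrization, with the line as a parameter. -/
def PhiMap : ProjSpace 2 → UnordConf 2 (ProjSpace 1) → UnordConf 2 (ProjSpace 2) :=
  Quotient.lift (fun u : NZ 2 => confMap (phiP w₁ w₂ u) (junkC 1))
    (by
      rintro u u' ⟨c, hc, hcx⟩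
      rw [phiP_scale w₁ w₂ u u' c hc hcx])

lemma PhiMap_mk (u : NZ 2) :
    PhiMap w₁ w₂ (pQ 2 u) = confMap (phiP w₁ w₂ u) (junkC 1) := rfl

/-- The fibrewise projection. -/
def PsiMap : UnordConf 2 (ProjSpace 2) → UnordConf 2 (ProjSpace 1) :=
  confMap (psiP w₁ w₂) (junkC 0)

/-- Membership predicate for the trivializing open set `U`. -/
def Umem : ProjSpace 2 → Prop :=
  Quotient.lift (fun u : NZ 2 => dot3 u.1 (cross w₁ w₂) ≠ 0)
    (by
      rintro u u' ⟨c, hc, hcx⟩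
      rw [hcx, dot3_smul_left]
      rw [eq_iff_iff]
      constructor
      · intro h hz
        rcases mul_eq_zero.1 hz with h' | h'
        · exact hc h'
        · exact h h'
      · intro h hz
        exact h (by rw [hz, mul_zero]))

lemma Umem_mk (u : NZ 2) : Umem w₁ w₂ (pQ 2 u) ↔ dot3 u.1 (cross w₁ w₂) ≠ 0 := Iff.rfl

lemma continuous_dot3_const {n : ℕ} (x₀ : Fin n → ℂ) :
    Continuous fun v : Fin n → ℂ => dot3 v x₀ :=
  continuous_finset_sum _ fun i _ => (continuous_apply i).mul continuous_const

lemma isOpen_U : IsOpen {x : ProjSpace 2 | Umem w₁ w₂ x} := by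
  rw [← (isOpenQuotientMap_pQ 2).isQuotientMap.isOpen_preimage]
  have : pQ 2 ⁻¹' {x | Umem w₁ w₂ x} = {u : NZ 2 | dot3 u.1 (cross w₁ w₂) ≠ 0} := rfl
  rw [this]
  exact isOpen_compl_iff.mpr
    (isClosed_singleton.preimage ((continuous_dot3_const (cross w₁ w₂)).comp
      continuous_subtype_val))

end Trivialization


section RoundTrips

variable (w₁ w₂ : Fin 3 → ℂ)

lemma psiv_zero : psiv w₁ w₂ 0 = 0 := by
  funext i
  fin_cases i <;> simp [psiv, dot3_eq]

lemma conf_ne {Z : Type} [TopologicalSpace Z] (w : OrdConf 2 Z) : w.1 0 ≠ w.1 1 :=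
  fun h => absurd (w.2 h) (by decide)

/-- Every 2-configuration in `ℙᴺ` has the form `(⟦s⟧, ⟦t⟧)`. -/
lemma conf_repr {N : ℕ} (w : OrdConf 2 (ProjSpace N)) :
    ∃ (s t : NZ N) (hst : pQ N s ≠ pQ N t), w = ⟨![pQ N s, pQ N t], inj_pair hst⟩ := by
  obtain ⟨s, hs⟩ := Quotient.exists_rep (w.1 0)
  obtain ⟨t, ht⟩ := Quotient.exists_rep (w.1 1)
  have hst : pQ N s ≠ pQ N t := by
    show Quotient.mk _ s ≠ Quotient.mk _ t
    rw [hs, ht]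
    exact conf_ne w
  refine ⟨s, t, hst, Subtype.ext (funext fun i => ?_)⟩
  rcases fin2_cases i with hi | hi <;> subst hi
  · exact hs.symm
  · exact ht.symm

/-- `φ u st` is nonzero when `u ∉ (w₁ × w₂)ᗮ`. -/
lemma phiv_ne (u : NZ 2) (hd : dot3 u.1 (cross w₁ w₂) ≠ 0) (st : NZ 1) :
    phiv w₁ w₂ u.1 st.1 ≠ 0 := by
  intro h0
  have hB := identB w₁ w₂ u.1 st.1
  rw [h0, psiv_zero] at hB
  exact st.2 ((smul_eq_zero.1 hB.symm).resolve_left hd)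

lemma psiP_phiP_point (u : NZ 2) (hd : dot3 u.1 (cross w₁ w₂) ≠ 0) (st : NZ 1) :
    psiP w₁ w₂ (pQ 2 ⟨phiv w₁ w₂ u.1 st.1, phiv_ne w₁ w₂ u hd st⟩) = pQ 1 st := by
  have hpsi : psiv w₁ w₂ (phiv w₁ w₂ u.1 st.1) ≠ 0 := by
    rw [identB]
    exact smul_ne_zero hd st.2
  rw [psiP_mk w₁ w₂ _ hpsi]
  refine ((pQ_eq_iff st ⟨_, hpsi⟩).2 ⟨dot3 u.1 (cross w₁ w₂), hd, ?_⟩).symm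
  exact identB w₁ w₂ u.1 st.1

lemma phiv_psiv_point (u p : NZ 2) (hup : dot3 u.1 p.1 = 0) :
    phiv w₁ w₂ u.1 (psiv w₁ w₂ p.1) = dot3 u.1 (cross w₁ w₂) • p.1 := by
  rw [identA, hup, zero_smul, sub_zero]

lemma phiP_psiP_point (u : NZ 2) (hd : dot3 u.1 (cross w₁ w₂) ≠ 0) (p : NZ 2)
    (hup : dot3 u.1 p.1 = 0) (hpsi : psiv w₁ w₂ p.1 ≠ 0) :
    phiP w₁ w₂ u (pQ 1 ⟨psiv w₁ w₂ p.1, hpsi⟩) = pQ 2 p := by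
  have hphi : phiv w₁ w₂ u.1 (psiv w₁ w₂ p.1) ≠ 0 :=
    phiv_ne w₁ w₂ u hd ⟨psiv w₁ w₂ p.1, hpsi⟩
  rw [phiP_mk w₁ w₂ u _ hphi]
  refine ((pQ_eq_iff p ⟨_, hphi⟩).2 ⟨dot3 u.1 (cross w₁ w₂), hd, ?_⟩).symm
  exact phiv_psiv_point w₁ w₂ u p hup

/-- The two projected points of a configuration on a line in `U` are distinct. -/
lemma psi_points_ne (a b : NZ 2) (hc : cross a.1 b.1 ≠ 0)
    (hd : dot3 (cross a.1 b.1) (cross w₁ w₂) ≠ 0)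
    (ha0 : psiv w₁ w₂ a.1 ≠ 0) (hb0 : psiv w₁ w₂ b.1 ≠ 0) :
    pQ 1 ⟨psiv w₁ w₂ a.1, ha0⟩ ≠ pQ 1 ⟨psiv w₁ w₂ b.1, hb0⟩ := by
  rw [Ne, pQ1_eq_iff_det2]
  show det2 (psiv w₁ w₂ a.1) (psiv w₁ w₂ b.1) ≠ 0
  rw [identD, dot3_comm]
  exact hd

lemma psiv_a_ne (a b : NZ 2) (hd : dot3 (cross a.1 b.1) (cross w₁ w₂) ≠ 0) :
    psiv w₁ w₂ a.1 ≠ 0 :=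
  psiv_ne_zero hd (dot3_cross_left a.1 b.1) a.2

lemma psiv_b_ne (a b : NZ 2) (hd : dot3 (cross a.1 b.1) (cross w₁ w₂) ≠ 0) :
    psiv w₁ w₂ b.1 ≠ 0 :=
  psiv_ne_zero hd (dot3_cross_right a.1 b.1) b.2

/-- The parametrized points of two distinct parameters are distinct. -/
lemma phi_points_ne (u : NZ 2) (hd : dot3 u.1 (cross w₁ w₂) ≠ 0) (s t : NZ 1)
    (hst : det2 s.1 t.1 ≠ 0) :
    pQ 2 ⟨phiv w₁ w₂ u.1 s.1, phiv_ne w₁ w₂ u hd s⟩ ≠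
      pQ 2 ⟨phiv w₁ w₂ u.1 t.1, phiv_ne w₁ w₂ u hd t⟩ := by
  rw [Ne, pQ_eq_iff_cross]
  show cross (phiv w₁ w₂ u.1 s.1) (phiv w₁ w₂ u.1 t.1) ≠ 0
  rw [identC]
  exact fun h => u.2 ((smul_eq_zero.1 h).resolve_left (mul_ne_zero hd hst))

lemma cross_phi (u : NZ 2) (hd : dot3 u.1 (cross w₁ w₂) ≠ 0) (s t : NZ 1)
    (hst : det2 s.1 t.1 ≠ 0) :
    cross (phiv w₁ w₂ u.1 s.1) (phiv w₁ w₂ u.1 t.1) ≠ 0 := by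
  rw [identC]
  exact fun h => u.2 ((smul_eq_zero.1 h).resolve_left (mul_ne_zero hd hst))

/-- First round trip ingredient: `lineU ∘ PhiMap x = x` on `U`. -/
lemma lineU_PhiMap (u : NZ 2) (hd : dot3 u.1 (cross w₁ w₂) ≠ 0)
    (c : UnordConf 2 (ProjSpace 1)) :
    lineU (PhiMap w₁ w₂ (pQ 2 u) c) = pQ 2 u := by
  induction c using Quotient.ind
  rename_i w
  obtain ⟨s, t, hst, rfl⟩ := conf_repr w
  have hdet : det2 s.1 t.1 ≠ 0 := fun h => hst ((pQ1_eq_iff_det2 s t).2 h)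
  show lineU (confMap (phiP w₁ w₂ u) (junkC 1)
    (cQ 2 (ProjSpace 1) ⟨![pQ 1 s, pQ 1 t], inj_pair hst⟩)) = pQ 2 u
  rw [confMap_mk_pair (phiP w₁ w₂ u) (junkC 1) _ _ _
    (phiP_mk w₁ w₂ u s (phiv_ne w₁ w₂ u hd s)) (phiP_mk w₁ w₂ u t (phiv_ne w₁ w₂ u hd t))
    (phi_points_ne w₁ w₂ u hd s t hdet)]
  rw [lineU_mk _ _ (inj_pair (phi_points_ne w₁ w₂ u hd s t hdet))
    (cross_phi w₁ w₂ u hd s t hdet)]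
  refine ((pQ_eq_iff u ⟨_, cross_phi w₁ w₂ u hd s t hdet⟩).2
    ⟨dot3 u.1 (cross w₁ w₂) * det2 s.1 t.1, mul_ne_zero hd hdet, ?_⟩).symm
  exact identC w₁ w₂ u.1 s.1 t.1

/-- Second round trip ingredient: `PsiMap ∘ PhiMap = id` on fibres over `U`. -/
lemma PsiMap_PhiMap (u : NZ 2) (hd : dot3 u.1 (cross w₁ w₂) ≠ 0)
    (c : UnordConf 2 (ProjSpace 1)) :
    PsiMap w₁ w₂ (PhiMap w₁ w₂ (pQ 2 u) c) = c := by
  induction c using Quotient.ind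
  rename_i w
  obtain ⟨s, t, hst, rfl⟩ := conf_repr w
  have hdet : det2 s.1 t.1 ≠ 0 := fun h => hst ((pQ1_eq_iff_det2 s t).2 h)
  show PsiMap w₁ w₂ (confMap (phiP w₁ w₂ u) (junkC 1)
      (cQ 2 (ProjSpace 1) ⟨![pQ 1 s, pQ 1 t], inj_pair hst⟩)) =
    cQ 2 (ProjSpace 1) ⟨![pQ 1 s, pQ 1 t], inj_pair hst⟩
  rw [confMap_mk_pair (phiP w₁ w₂ u) (junkC 1) _ _ _
    (phiP_mk w₁ w₂ u s (phiv_ne w₁ w₂ u hd s)) (phiP_mk w₁ w₂ u t (phiv_ne w₁ w₂ u hd t))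
    (phi_points_ne w₁ w₂ u hd s t hdet)]
  show confMap (psiP w₁ w₂) (junkC 0) _ = _
  rw [confMap_mk_pair (psiP w₁ w₂) (junkC 0) _ _ _
    (psiP_phiP_point w₁ w₂ u hd s) (psiP_phiP_point w₁ w₂ u hd t) hst]

/-- Third round trip ingredient: `PhiMap (lineU x) (PsiMap x) = x` over `U`. -/
lemma PhiMap_PsiMap (x : UnordConf 2 (ProjSpace 2)) (hx : Umem w₁ w₂ (lineU x)) :
    PhiMap w₁ w₂ (lineU x) (PsiMap w₁ w₂ x) = x := by
  induction x using Quotient.ind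
  rename_i w
  obtain ⟨a, b, hab, rfl⟩ := conf_repr w
  have hc : cross a.1 b.1 ≠ 0 := fun h => hab ((pQ_eq_iff_cross a b).2 h)
  have hline : lineU (cQ 2 (ProjSpace 2) ⟨![pQ 2 a, pQ 2 b], inj_pair hab⟩) =
      pQ 2 ⟨cross a.1 b.1, hc⟩ := lineU_mk a b (inj_pair hab) hc
  have hx' : Umem w₁ w₂ (lineU (cQ 2 (ProjSpace 2) ⟨![pQ 2 a, pQ 2 b], inj_pair hab⟩)) := hx
  rw [hline] at hx'
  have hd : dot3 (cross a.1 b.1) (cross w₁ w₂) ≠ 0 := hx'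
  have ha0 : psiv w₁ w₂ a.1 ≠ 0 := psiv_a_ne w₁ w₂ a b hd
  have hb0 : psiv w₁ w₂ b.1 ≠ 0 := psiv_b_ne w₁ w₂ a b hd
  show PhiMap w₁ w₂ (lineU (cQ 2 (ProjSpace 2) ⟨![pQ 2 a, pQ 2 b], inj_pair hab⟩))
      (confMap (psiP w₁ w₂) (junkC 0) (cQ 2 (ProjSpace 2) ⟨![pQ 2 a, pQ 2 b], inj_pair hab⟩)) =
    cQ 2 (ProjSpace 2) ⟨![pQ 2 a, pQ 2 b], inj_pair hab⟩
  rw [hline]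
  rw [confMap_mk_pair (psiP w₁ w₂) (junkC 0) _ _ _
    (psiP_mk w₁ w₂ a ha0) (psiP_mk w₁ w₂ b hb0)
    (psi_points_ne w₁ w₂ a b hc hd ha0 hb0)]
  rw [PhiMap_mk]
  rw [confMap_mk_pair (phiP w₁ w₂ ⟨cross a.1 b.1, hc⟩) (junkC 1) _ _
    (inj_pair (psi_points_ne w₁ w₂ a b hc hd ha0 hb0))
    (phiP_psiP_point w₁ w₂ ⟨cross a.1 b.1, hc⟩ hd a (dot3_cross_left a.1 b.1) ha0)
    (phiP_psiP_point w₁ w₂ ⟨cross a.1 b.1, hc⟩ hd b (dot3_cross_right a.1 b.1) hb0)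
    hab]

end RoundTrips


section Homeo

variable (w₁ w₂ : Fin 3 → ℂ)

/-- The trivializing open set. -/
def Uset : Set (ProjSpace 2) := {x : ProjSpace 2 | Umem w₁ w₂ x}

lemma lineU_PhiMap' (x : ProjSpace 2) (hx : Umem w₁ w₂ x) (c : UnordConf 2 (ProjSpace 1)) :
    lineU (PhiMap w₁ w₂ x c) = x := by
  induction x using Quotient.ind
  rename_i u
  exact lineU_PhiMap w₁ w₂ u hx c

lemma PsiMap_PhiMap' (x : ProjSpace 2) (hx : Umem w₁ w₂ x) (c : UnordConf 2 (ProjSpace 1)) :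
    PsiMap w₁ w₂ (PhiMap w₁ w₂ x c) = c := by
  induction x using Quotient.ind
  rename_i u
  exact PsiMap_PhiMap w₁ w₂ u hx c

/-- The forward map of the trivialization. -/
def Emap : ↥(lineU ⁻¹' Uset w₁ w₂) → ↥(Uset w₁ w₂) × UnordConf 2 (ProjSpace 1) :=
  fun x => (⟨lineU x.1, x.2⟩, PsiMap w₁ w₂ x.1)

/-- The backward map of the trivialization. -/
def Esymm : ↥(Uset w₁ w₂) × UnordConf 2 (ProjSpace 1) → ↥(lineU ⁻¹' Uset w₁ w₂) :=
  fun y => ⟨PhiMap w₁ w₂ y.1.1 y.2, by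
    simp only [Set.mem_preimage]
    show Umem w₁ w₂ (lineU (PhiMap w₁ w₂ y.1.1 y.2))
    rw [lineU_PhiMap' w₁ w₂ y.1.1 y.1.2 y.2]
    exact y.1.2⟩

lemma Esymm_Emap (x : ↥(lineU ⁻¹' Uset w₁ w₂)) : Esymm w₁ w₂ (Emap w₁ w₂ x) = x := by
  apply Subtype.ext
  exact PhiMap_PsiMap w₁ w₂ x.1 x.2

lemma Emap_Esymm (y : ↥(Uset w₁ w₂) × UnordConf 2 (ProjSpace 1)) :
    Emap w₁ w₂ (Esymm w₁ w₂ y) = y := by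
  have h1 : lineU (PhiMap w₁ w₂ y.1.1 y.2) = y.1.1 := lineU_PhiMap' w₁ w₂ y.1.1 y.1.2 y.2
  have h2 : PsiMap w₁ w₂ (PhiMap w₁ w₂ y.1.1 y.2) = y.2 := PsiMap_PhiMap' w₁ w₂ y.1.1 y.1.2 y.2
  refine Prod.ext (Subtype.ext ?_) ?_
  · exact h1
  · exact h2

/-- Combined open quotient onto `B(2,ℙ²)`. -/
def Mmap : ↥(Prod.map (pQ 2) (pQ 2) ⁻¹' Sdist) → UnordConf 2 (ProjSpace 2) :=
  cQ 2 (ProjSpace 2) ∘ ordQ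

lemma isOpenQuotientMap_Mmap : IsOpenQuotientMap Mmap :=
  (isOpenQuotientMap_cQ 2 (ProjSpace 2)).comp isOpenQuotientMap_ordQ

lemma lineU_Mmap (y : ↥(Prod.map (pQ 2) (pQ 2) ⁻¹' Sdist)) :
    lineU (Mmap y) = pQ 2 ⟨cross y.1.1.1 y.1.2.1, ordQ_cross_ne y⟩ :=
  lineU_mk y.1.1 y.1.2 _ (ordQ_cross_ne y)

/-- continuity helpers -/
lemma continuous_dot3_left {n : ℕ} (a : Fin n → ℂ) :
    Continuous fun v : Fin n → ℂ => dot3 a v :=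
  continuous_finset_sum _ fun i _ => continuous_const.mul (continuous_apply i)

lemma continuous_psiv : Continuous fun v : Fin 3 → ℂ => psiv w₁ w₂ v := by
  refine continuous_pi fun i => ?_
  rcases fin2_cases i with hi | hi <;> subst hi <;>
    simp only [psiv, Matrix.cons_val_zero, Matrix.cons_val_one, Matrix.head_cons]
  · exact continuous_dot3_left w₂
  · exact (continuous_dot3_left w₁).neg

lemma continuous_phiv : Continuous fun q : (Fin 3 → ℂ) × (Fin 2 → ℂ) =>
    phiv w₁ w₂ q.1 q.2 := by
  refine continuous_pi fun i => ?_
  have hc : ∀ (w : Fin 3 → ℂ) (j : Fin 3),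
      Continuous fun q : (Fin 3 → ℂ) × (Fin 2 → ℂ) => cross q.1 w j := by
    intro w j
    have c1 : ∀ k : Fin 3, Continuous fun q : (Fin 3 → ℂ) × (Fin 2 → ℂ) => q.1 k :=
      fun k => (continuous_apply k).comp continuous_fst
    fin_cases j <;>
      simp only [cross, Matrix.cons_val_zero, Matrix.cons_val_one, Matrix.head_cons,
        Matrix.cons_val_two, Matrix.tail_cons] <;>
      exact ((c1 _).mul continuous_const).sub ((c1 _).mul continuous_const)
  have c2 : ∀ k : Fin 2, Continuous fun q : (Fin 3 → ℂ) × (Fin 2 → ℂ) => q.2 k :=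
    fun k => (continuous_apply k).comp continuous_snd
  show Continuous fun q : (Fin 3 → ℂ) × (Fin 2 → ℂ) =>
    (q.2 0 • cross q.1 w₁ + q.2 1 • cross q.1 w₂) i
  simp only [Pi.add_apply, Pi.smul_apply, smul_eq_mul]
  exact ((c2 0).mul (hc w₁ i)).add ((c2 1).mul (hc w₂ i))

/-- Derived hypotheses for points in the restricted total space. -/
lemma Mmap_hd (y : ↥(Mmap ⁻¹' (lineU ⁻¹' Uset w₁ w₂))) :
    dot3 (cross y.1.1.1.1 y.1.1.2.1) (cross w₁ w₂) ≠ 0 := by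
  have h := y.2
  simp only [Set.mem_preimage] at h
  rw [lineU_Mmap] at h
  exact h

lemma continuous_Emap : Continuous (Emap w₁ w₂) := by
  apply Continuous.prodMk
  · exact Continuous.subtype_mk (continuous_lineU.comp continuous_subtype_val) _
  · -- continuity of x ↦ PsiMap x.1 via the open quotient Mmap restricted to the preimage
    have hpre : IsOpen (lineU ⁻¹' Uset w₁ w₂) := (isOpen_U w₁ w₂).preimage continuous_lineU
    have hQ : IsOpenQuotientMap ((lineU ⁻¹' Uset w₁ w₂).restrictPreimage Mmap) :=
      openQuotRestrict isOpenQuotientMap_Mmap hpre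
    rw [← hQ.continuous_comp_iff]
    have heq : (fun x : ↥(lineU ⁻¹' Uset w₁ w₂) => PsiMap w₁ w₂ x.1) ∘
        ((lineU ⁻¹' Uset w₁ w₂).restrictPreimage Mmap) =
        fun y : ↥(Mmap ⁻¹' (lineU ⁻¹' Uset w₁ w₂)) =>
          cQ 2 (ProjSpace 1) ((dpHomeo (ProjSpace 1))
            ⟨(pQ 1 ⟨psiv w₁ w₂ y.1.1.1.1, psiv_a_ne w₁ w₂ y.1.1.1 y.1.1.2 (Mmap_hd w₁ w₂ y)⟩,
              pQ 1 ⟨psiv w₁ w₂ y.1.1.2.1, psiv_b_ne w₁ w₂ y.1.1.1 y.1.1.2 (Mmap_hd w₁ w₂ y)⟩),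
              psi_points_ne w₁ w₂ y.1.1.1 y.1.1.2 (ordQ_cross_ne y.1) (Mmap_hd w₁ w₂ y) _ _⟩) := by
      funext y
      have hne : pQ 2 y.1.1.1 ≠ pQ 2 y.1.1.2 := y.1.2
      show confMap (psiP w₁ w₂) (junkC 0)
        (cQ 2 (ProjSpace 2) ⟨![pQ 2 y.1.1.1, pQ 2 y.1.1.2], inj_pair hne⟩) = _
      rw [confMap_mk_pair (psiP w₁ w₂) (junkC 0) (pQ 2 y.1.1.1) (pQ 2 y.1.1.2) _
        (psiP_mk w₁ w₂ y.1.1.1 (psiv_a_ne w₁ w₂ y.1.1.1 y.1.1.2 (Mmap_hd w₁ w₂ y)))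
        (psiP_mk w₁ w₂ y.1.1.2 (psiv_b_ne w₁ w₂ y.1.1.1 y.1.1.2 (Mmap_hd w₁ w₂ y)))
        (psi_points_ne w₁ w₂ y.1.1.1 y.1.1.2 (ordQ_cross_ne y.1) (Mmap_hd w₁ w₂ y) _ _)]
      exact cQ_congr rfl
    rw [heq]
    refine ((isOpenQuotientMap_cQ 2 (ProjSpace 1)).continuous.comp
      ((dpHomeo (ProjSpace 1)).continuous.comp ?_))
    apply Continuous.subtype_mk
    apply Continuous.prodMk
    · exact (isOpenQuotientMap_pQ 1).continuous.comp (Continuous.subtype_mk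
        ((continuous_psiv w₁ w₂).comp (continuous_subtype_val.comp
          ((continuous_fst.comp continuous_subtype_val).comp continuous_subtype_val))) _)
    · exact (isOpenQuotientMap_pQ 1).continuous.comp (Continuous.subtype_mk
        ((continuous_psiv w₁ w₂).comp (continuous_subtype_val.comp
          ((continuous_snd.comp continuous_subtype_val).comp continuous_subtype_val))) _)

/-- Analogue of `Sdist` for `ℙ¹`. -/
def Sdist1 : Set (ProjSpace 1 × ProjSpace 1) := {p | p.1 ≠ p.2}

lemma continuous_det2NZ : Continuous fun p : NZ 1 × NZ 1 => det2 p.1.1 p.2.1 := by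
  have c1 : ∀ j : Fin 2, Continuous fun p : NZ 1 × NZ 1 => p.1.1 j := fun j =>
    (continuous_apply j).comp (continuous_subtype_val.comp continuous_fst)
  have c2 : ∀ j : Fin 2, Continuous fun p : NZ 1 × NZ 1 => p.2.1 j := fun j =>
    (continuous_apply j).comp (continuous_subtype_val.comp continuous_snd)
  exact ((c1 0).mul (c2 1)).sub ((c1 1).mul (c2 0))

lemma preimage_Sdist1 :
    Prod.map (pQ 1) (pQ 1) ⁻¹' Sdist1 = {p : NZ 1 × NZ 1 | det2 p.1.1 p.2.1 ≠ 0} := by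
  ext p
  simp only [Set.mem_preimage, Sdist1, Set.mem_setOf_eq, Prod.map]
  exact not_congr (pQ1_eq_iff_det2 p.1 p.2)

lemma isOpen_Sdist1 : IsOpen Sdist1 := by
  rw [← ((isOpenQuotientMap_pQ 1).prodMap (isOpenQuotientMap_pQ 1)).isQuotientMap.isOpen_preimage]
  rw [preimage_Sdist1]
  exact isOpen_compl_iff.mpr (isClosed_singleton.preimage continuous_det2NZ)

/-- Combined open quotient onto `B(2,ℙ¹)`. -/
def M1map : ↥(Prod.map (pQ 1) (pQ 1) ⁻¹' Sdist1) → UnordConf 2 (ProjSpace 1) :=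
  cQ 2 (ProjSpace 1) ∘ (dpHomeo (ProjSpace 1)) ∘ (Sdist1.restrictPreimage (Prod.map (pQ 1) (pQ 1)))

lemma isOpenQuotientMap_M1map : IsOpenQuotientMap M1map :=
  (isOpenQuotientMap_cQ 2 (ProjSpace 1)).comp ((homeoOpenQuot _).comp
    (openQuotRestrict ((isOpenQuotientMap_pQ 1).prodMap (isOpenQuotientMap_pQ 1)) isOpen_Sdist1))

lemma M1map_det_ne (z : ↥(Prod.map (pQ 1) (pQ 1) ⁻¹' Sdist1)) :
    det2 z.1.1.1 z.1.2.1 ≠ 0 :=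
  (Set.ext_iff.1 preimage_Sdist1 z.1).1 z.2

lemma continuous_Esymm : Continuous (Esymm w₁ w₂) := by
  apply Continuous.subtype_mk
  -- continuity of (x, c) ↦ PhiMap x.1 c via the product of open quotient maps
  have hQ : IsOpenQuotientMap (Prod.map
      ((Uset w₁ w₂).restrictPreimage (pQ 2)) M1map) :=
    (openQuotRestrict (isOpenQuotientMap_pQ 2) (isOpen_U w₁ w₂)).prodMap isOpenQuotientMap_M1map
  rw [← hQ.continuous_comp_iff]
  have hd : ∀ (zu : ↥(pQ 2 ⁻¹' Uset w₁ w₂)), dot3 zu.1.1 (cross w₁ w₂) ≠ 0 := fun zu => zu.2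
  have heq : ((fun y : ↥(Uset w₁ w₂) × UnordConf 2 (ProjSpace 1) =>
      PhiMap w₁ w₂ y.1.1 y.2) ∘ (Prod.map ((Uset w₁ w₂).restrictPreimage (pQ 2)) M1map)) =
      fun z : ↥(pQ 2 ⁻¹' Uset w₁ w₂) × ↥(Prod.map (pQ 1) (pQ 1) ⁻¹' Sdist1) =>
        cQ 2 (ProjSpace 2) ((dpHomeo (ProjSpace 2))
          ⟨(pQ 2 ⟨phiv w₁ w₂ z.1.1.1 z.2.1.1.1, phiv_ne w₁ w₂ z.1.1 (hd z.1) z.2.1.1⟩,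
            pQ 2 ⟨phiv w₁ w₂ z.1.1.1 z.2.1.2.1, phiv_ne w₁ w₂ z.1.1 (hd z.1) z.2.1.2⟩),
            phi_points_ne w₁ w₂ z.1.1 (hd z.1) z.2.1.1 z.2.1.2 (M1map_det_ne z.2)⟩) := by
    funext z
    have hne1 : pQ 1 z.2.1.1 ≠ pQ 1 z.2.1.2 := z.2.2
    show confMap (phiP w₁ w₂ z.1.1) (junkC 1)
      (cQ 2 (ProjSpace 1) ⟨![pQ 1 z.2.1.1, pQ 1 z.2.1.2], inj_pair hne1⟩) = _
    rw [confMap_mk_pair (phiP w₁ w₂ z.1.1) (junkC 1) (pQ 1 z.2.1.1) (pQ 1 z.2.1.2) _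
      (phiP_mk w₁ w₂ z.1.1 z.2.1.1 (phiv_ne w₁ w₂ z.1.1 (hd z.1) z.2.1.1))
      (phiP_mk w₁ w₂ z.1.1 z.2.1.2 (phiv_ne w₁ w₂ z.1.1 (hd z.1) z.2.1.2))
      (phi_points_ne w₁ w₂ z.1.1 (hd z.1) z.2.1.1 z.2.1.2 (M1map_det_ne z.2))]
    exact cQ_congr rfl
  rw [heq]
  refine (isOpenQuotientMap_cQ 2 (ProjSpace 2)).continuous.comp
    ((dpHomeo (ProjSpace 2)).continuous.comp ?_)
  apply Continuous.subtype_mk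
  have cu : Continuous fun z : ↥(pQ 2 ⁻¹' Uset w₁ w₂) × ↥(Prod.map (pQ 1) (pQ 1) ⁻¹' Sdist1) =>
      z.1.1.1 := continuous_subtype_val.comp (continuous_subtype_val.comp continuous_fst)
  have cs : Continuous fun z : ↥(pQ 2 ⁻¹' Uset w₁ w₂) × ↥(Prod.map (pQ 1) (pQ 1) ⁻¹' Sdist1) =>
      z.2.1.1.1 := continuous_subtype_val.comp
        (continuous_fst.comp (continuous_subtype_val.comp continuous_snd))
  have ct : Continuous fun z : ↥(pQ 2 ⁻¹' Uset w₁ w₂) × ↥(Prod.map (pQ 1) (pQ 1) ⁻¹' Sdist1) =>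
      z.2.1.2.1 := continuous_subtype_val.comp
        (continuous_snd.comp (continuous_subtype_val.comp continuous_snd))
  apply Continuous.prodMk
  · exact (isOpenQuotientMap_pQ 2).continuous.comp
      (Continuous.subtype_mk ((continuous_phiv w₁ w₂).comp (cu.prodMk cs)) _)
  · exact (isOpenQuotientMap_pQ 2).continuous.comp
      (Continuous.subtype_mk ((continuous_phiv w₁ w₂).comp (cu.prodMk ct)) _)

/-- The local trivialization homeomorphism. -/
def trivHomeo : ↥(lineU ⁻¹' Uset w₁ w₂) ≃ₜ ↥(Uset w₁ w₂) × UnordConf 2 (ProjSpace 1) where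
  toFun := Emap w₁ w₂
  invFun := Esymm w₁ w₂
  left_inv := Esymm_Emap w₁ w₂
  right_inv := Emap_Esymm w₁ w₂
  continuous_toFun := continuous_Emap w₁ w₂
  continuous_invFun := continuous_Esymm w₁ w₂

/-- Existence of a frame adapted to any nonzero covector. -/
lemma exists_frame (β : Fin 3 → ℂ) (hβ : β ≠ 0) :
    ∃ w₁ w₂ : Fin 3 → ℂ, dot3 β (cross w₁ w₂) ≠ 0 := by
  obtain ⟨i, hi⟩ := Function.ne_iff.1 hβ
  simp only [Pi.zero_apply] at hi
  rcases fin3_cases i with h | h | h <;> subst h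
  · exact ⟨![0, 1, 0], ![0, 0, 1], by simpa [dot3_eq, cross] using hi⟩
  · exact ⟨![0, 0, 1], ![1, 0, 0], by simpa [dot3_eq, cross] using hi⟩
  · exact ⟨![1, 0, 0], ![0, 1, 0], by simpa [dot3_eq, cross] using hi⟩

end Homeo


end B2P2

/-- The map sending an unordered pair of distinct points `{p,q}` of `ℙ²` to the line `pq`
(a point of the dual projective plane, given in dual coordinates by a nonzero vector
orthogonal to representatives of both points) is a locally trivial fibration
`B(2,ℙ²) → (ℙ²)ᵛ` with fibre isomorphic to `B(2,ℙ¹)`. -/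
theorem b2p2_line_fibration :
    ∃ π : C(UnordConf 2 (ProjSpace 2), ProjSpace 2),
      -- π is the map sending a pair of distinct points to the line through them:
      (∀ (p q : {v : Fin 3 → ℂ // v ≠ 0})
        (h : Function.Injective
          (![Quotient.mk (projSetoid 2) p, Quotient.mk (projSetoid 2) q] : Fin 2 → ProjSpace 2)),
        ∀ u : {v : Fin 3 → ℂ // v ≠ 0},
          Quotient.mk (projSetoid 2) u =
            π (Quotient.mk (confSetoid 2 (ProjSpace 2))
              ⟨![Quotient.mk (projSetoid 2) p, Quotient.mk (projSetoid 2) q], h⟩) →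
          (∑ i, u.1 i * p.1 i) = 0 ∧ (∑ i, u.1 i * q.1 i) = 0) ∧
      -- π is a locally trivial fibration with fibre B(2,ℙ¹):
      (∀ b : ProjSpace 2, ∃ U : Set (ProjSpace 2), IsOpen U ∧ b ∈ U ∧
        ∃ e : (π ⁻¹' U : Set (UnordConf 2 (ProjSpace 2))) ≃ₜ U × UnordConf 2 (ProjSpace 1),
          ∀ x, ((e x).1 : ProjSpace 2) = π x.1) := by
  classical
  refine ⟨⟨B2P2.lineU, B2P2.continuous_lineU⟩, ?_, ?_⟩
  · intro p q h u hu
    have hpq : Quotient.mk (projSetoid 2) p ≠ Quotient.mk (projSetoid 2) q := B2P2.pair_ne h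
    have hc : B2P2.cross p.1 q.1 ≠ 0 := fun hz => hpq ((B2P2.pQ_eq_iff_cross p q).2 hz)
    have hπ : (⟨B2P2.lineU, B2P2.continuous_lineU⟩ :
        C(UnordConf 2 (ProjSpace 2), ProjSpace 2))
          (Quotient.mk (confSetoid 2 (ProjSpace 2))
            ⟨![Quotient.mk (projSetoid 2) p, Quotient.mk (projSetoid 2) q], h⟩) =
        B2P2.pQ 2 ⟨B2P2.cross p.1 q.1, hc⟩ := B2P2.lineU_mk p q h hc
    rw [hπ] at hu
    obtain ⟨c, hc0, hcx⟩ :=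
      (B2P2.pQ_eq_iff ⟨B2P2.cross p.1 q.1, hc⟩ u).1 hu.symm
    constructor
    · show B2P2.dot3 u.1 p.1 = 0
      rw [hcx, B2P2.dot3_smul_left, B2P2.dot3_cross_left, mul_zero]
    · show B2P2.dot3 u.1 q.1 = 0
      rw [hcx, B2P2.dot3_smul_left, B2P2.dot3_cross_right, mul_zero]
  · intro b
    obtain ⟨β, hβ⟩ := Quotient.exists_rep b
    obtain ⟨w₁, w₂, hd⟩ := B2P2.exists_frame β.1 β.2
    refine ⟨B2P2.Uset w₁ w₂, B2P2.isOpen_U w₁ w₂, ?_, ?_⟩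
    · show B2P2.Umem w₁ w₂ b
      rw [← hβ]
      exact hd
    · exact ⟨B2P2.trivHomeo w₁ w₂, fun x => rfl⟩
end
end

section
/- Let K be a set of four points of ℙ^2 in general position and let τ ⊂ ℙ^2 be a line disjoint from K. Then exactly two conics of the pencil M_K through K are tangent to τ; moreover these two conics coincide if and only if τ meets the base locus K of the pencil (so under the disjointness hypothesis they are always distinct). -/
open MvPolynomial

/-- `Q` is a member of the pencil of conics through the four points `a 0, …, a 3`. -/
def InConicPencil (a : Fin 4 → Fin 3 → ℂ) (Q : MvPolynomial (Fin 3) ℂ) : Prop :=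
  Q ∈ homogeneousSubmodule (Fin 3) ℂ 2 ∧ ∀ i, eval (a i) Q = 0

/-- The conic `Q` is tangent to the line spanned by `p` and `q`: the restriction of `Q` to the
line, a binary quadratic form in the parameters `(s,u)`, is nonzero with a double root. -/
def TangentAlong (p q : Fin 3 → ℂ) (Q : MvPolynomial (Fin 3) ℂ) : Prop :=
  ∃ c α β : ℂ, c ≠ 0 ∧ (α ≠ 0 ∨ β ≠ 0) ∧
    ∀ s u : ℂ, eval (s • p + u • q) Q = c * (α * s + β * u) ^ 2

namespace TT
noncomputable section

def dot (u v : Fin 3 → ℂ) : ℂ := u 0 * v 0 + u 1 * v 1 + u 2 * v 2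

def cr (u v : Fin 3 → ℂ) : Fin 3 → ℂ :=
  ![u 1 * v 2 - u 2 * v 1, u 2 * v 0 - u 0 * v 2, u 0 * v 1 - u 1 * v 0]

def det3 (u v w : Fin 3 → ℂ) : ℂ := dot (cr u v) w

def lin (c : Fin 3 → ℂ) : MvPolynomial (Fin 3) ℂ :=
  C (c 0) * X 0 + C (c 1) * X 1 + C (c 2) * X 2

lemma eval_lin (c x : Fin 3 → ℂ) : eval x (lin c) = dot c x := by
  simp [lin, dot]

lemma lin_homog (c : Fin 3 → ℂ) : (lin c).IsHomogeneous 1 := by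
  apply MvPolynomial.IsHomogeneous.add
  apply MvPolynomial.IsHomogeneous.add
  all_goals simpa using (isHomogeneous_C (Fin 3) _).mul (isHomogeneous_X ℂ _)

lemma id6 (x y z : Fin 3 → ℂ) :
    cr x (cr y z) = dot x z • y - dot x y • z := by
  funext k; fin_cases k <;> simp [cr, dot] <;> ring

lemma id7 (u v w : Fin 3 → ℂ) :
    cr (cr u v) (cr u w) = det3 u v w • u := by
  funext k; fin_cases k <;> simp [cr, dot, det3] <;> ring

lemma cramer3 (u v w x : Fin 3 → ℂ) :
    det3 u v w • x = det3 x v w • u + det3 u x w • v + det3 u v x • w := by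
  funext k; fin_cases k <;> simp [cr, dot, det3] <;> ring

lemma det3_self12 (u v : Fin 3 → ℂ) : det3 u v u = 0 := by simp [det3, cr, dot]; ring
lemma det3_self22 (u v : Fin 3 → ℂ) : det3 u v v = 0 := by simp [det3, cr, dot]; ring

lemma dot_comm (u v : Fin 3 → ℂ) : dot u v = dot v u := by simp [dot]; ring

lemma dot_sp (c p q : Fin 3 → ℂ) (s u : ℂ) :
    dot c (s • p + u • q) = s * dot c p + u * dot c q := by
  simp [dot]; ring

lemma fin3 {P : Fin 3 → Prop} (h0 : P 0) (h1 : P 1) (h2 : P 2) : ∀ k, P k := by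
  intro k; fin_cases k; exacts [h0, h1, h2]

lemma fin4 {P : Fin 4 → Prop} (h0 : P 0) (h1 : P 1) (h2 : P 2) (h3 : P 3) : ∀ k, P k := by
  intro k; fin_cases k; exacts [h0, h1, h2, h3]

lemma cross_eq_zero {x y : Fin 3 → ℂ} (h : cr x y = 0) (hx : x ≠ 0) : ∃ t : ℂ, y = t • x := by
  have h0 := congrFun h 0
  have h1 := congrFun h 1
  have h2 := congrFun h 2
  simp [cr, sub_eq_zero] at h0 h1 h2
  have hx' : x 0 ≠ 0 ∨ x 1 ≠ 0 ∨ x 2 ≠ 0 := by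
    by_contra hc
    push_neg at hc
    exact hx (funext (fin3 hc.1 hc.2.1 hc.2.2))
  rcases hx' with h | h | h
  · refine ⟨y 0 / x 0, funext (fin3 ?_ ?_ ?_)⟩ <;>
      rw [Pi.smul_apply, smul_eq_mul, div_mul_eq_mul_div, eq_div_iff h]
    · linear_combination h2
    · linear_combination -h1
  · refine ⟨y 1 / x 1, funext (fin3 ?_ ?_ ?_)⟩ <;>
      rw [Pi.smul_apply, smul_eq_mul, div_mul_eq_mul_div, eq_div_iff h]
    · linear_combination -h2
    · linear_combination h0
  · refine ⟨y 2 / x 2, funext (fin3 ?_ ?_ ?_)⟩ <;>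
      rw [Pi.smul_apply, smul_eq_mul, div_mul_eq_mul_div, eq_div_iff h]
    · linear_combination h1
    · linear_combination -h0


lemma li3_det {u v w : Fin 3 → ℂ} (h : LinearIndependent ℂ ![u, v, w]) : det3 u v w ≠ 0 := by
  intro hd
  have hdet : (Matrix.of ![u, v, w]).det = 0 := by
    rw [Matrix.det_fin_three]
    simp only [det3, cr, dot, Matrix.of_apply, Matrix.cons_val', Matrix.cons_val_zero,
      Matrix.cons_val_one, Matrix.head_cons, Matrix.empty_val', Matrix.cons_val_fin_one,
      Matrix.head_fin_const] at hd ⊢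
    simp [Matrix.cons_val_zero, Matrix.cons_val_one] at hd ⊢
    linear_combination hd
  obtain ⟨g, hgne, hg⟩ := (Matrix.exists_vecMul_eq_zero_iff).2 hdet
  have hsum : ∑ i, g i • (![u, v, w] i) = 0 := by
    funext j
    have := congrFun hg j
    simp [Matrix.vecMul, dotProduct, Fin.sum_univ_three] at this ⊢
    linear_combination this
  have := Fintype.linearIndependent_iff.1 h g hsum
  exact hgne (funext fun i => this i)

lemma li2 {p q : Fin 3 → ℂ} (h : LinearIndependent ℂ ![p, q]) {s t : ℂ}
    (hst : s • p + t • q = 0) : s = 0 ∧ t = 0 := by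
  have hsum : ∑ i, (![s, t]) i • (![p, q] i) = 0 := by
    simpa [Fin.sum_univ_two] using hst
  have := Fintype.linearIndependent_iff.1 h ![s, t] hsum
  exact ⟨this 0, this 1⟩


lemma deg2_struct {d : Fin 3 →₀ ℕ} (hd : Finsupp.degree d = 2) :
    ∃ i j : Fin 3, d = Finsupp.single i 1 + Finsupp.single j 1 := by
  have hsum : d 0 + d 1 + d 2 = 2 := by
    have : Finsupp.degree d = ∑ i : Fin 3, d i :=
      Finset.sum_subset (Finset.subset_univ _) (by
        intro x _ hx
        simpa using Finsupp.notMem_support_iff.1 hx)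
    rw [this, Fin.sum_univ_three] at hd
    exact hd
  have hcase : (d 0 = 2 ∧ d 1 = 0 ∧ d 2 = 0) ∨ (d 0 = 0 ∧ d 1 = 2 ∧ d 2 = 0) ∨
      (d 0 = 0 ∧ d 1 = 0 ∧ d 2 = 2) ∨ (d 0 = 1 ∧ d 1 = 1 ∧ d 2 = 0) ∨
      (d 0 = 1 ∧ d 1 = 0 ∧ d 2 = 1) ∨ (d 0 = 0 ∧ d 1 = 1 ∧ d 2 = 1) := by omega
  have mk : ∀ (i j : Fin 3), (∀ k, d k = Finsupp.single i 1 k + Finsupp.single j 1 k) →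
      d = Finsupp.single i 1 + Finsupp.single j 1 := fun i j h =>
    Finsupp.ext fun k => by rw [Finsupp.add_apply]; exact h k
  rcases hcase with ⟨h0,h1,h2⟩|⟨h0,h1,h2⟩|⟨h0,h1,h2⟩|⟨h0,h1,h2⟩|⟨h0,h1,h2⟩|⟨h0,h1,h2⟩
  · exact ⟨0, 0, mk 0 0 (fin3 (by simp [h0, Finsupp.single_apply]) (by simp [h1, Finsupp.single_apply]) (by simp [h2, Finsupp.single_apply]))⟩
  · exact ⟨1, 1, mk 1 1 (fin3 (by simp [h0, Finsupp.single_apply]) (by simp [h1, Finsupp.single_apply]) (by simp [h2, Finsupp.single_apply]))⟩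
  · exact ⟨2, 2, mk 2 2 (fin3 (by simp [h0, Finsupp.single_apply]) (by simp [h1, Finsupp.single_apply]) (by simp [h2, Finsupp.single_apply]))⟩
  · exact ⟨0, 1, mk 0 1 (fin3 (by simp [h0, Finsupp.single_apply]) (by simp [h1, Finsupp.single_apply]) (by simp [h2, Finsupp.single_apply]))⟩
  · exact ⟨0, 2, mk 0 2 (fin3 (by simp [h0, Finsupp.single_apply]) (by simp [h1, Finsupp.single_apply]) (by simp [h2, Finsupp.single_apply]))⟩
  · exact ⟨1, 2, mk 1 2 (fin3 (by simp [h0, Finsupp.single_apply]) (by simp [h1, Finsupp.single_apply]) (by simp [h2, Finsupp.single_apply]))⟩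

lemma monomial_deg2 {d : Fin 3 →₀ ℕ} (hd : Finsupp.degree d = 2) (c : ℂ) :
    ∃ i j : Fin 3, monomial d c = C c * X i * X j := by
  obtain ⟨i, j, rfl⟩ := deg2_struct hd
  refine ⟨i, j, ?_⟩
  rw [monomial_single_add, pow_one]
  rw [show Finsupp.single j 1 = Finsupp.single j 1 + 0 by simp, monomial_single_add, pow_one]
  simp [monomial_zero']
  ring


def Polar3 (u v w : Fin 3 → ℂ) (r s t : ℂ) (P : MvPolynomial (Fin 3) ℂ) : Prop :=
  eval (r • u + s • v + t • w) P =
    r ^ 2 * eval u P + s ^ 2 * eval v P + t ^ 2 * eval w P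
    + r * s * (eval (u + v) P - eval u P - eval v P)
    + r * t * (eval (u + w) P - eval u P - eval w P)
    + s * t * (eval (v + w) P - eval v P - eval w P)

lemma polar3_aux (u v w : Fin 3 → ℂ) (r s t : ℂ) (S : Finset (Fin 3 →₀ ℕ))
    (f : (Fin 3 →₀ ℕ) → MvPolynomial (Fin 3) ℂ) (hf : ∀ d ∈ S, Polar3 u v w r s t (f d)) :
    Polar3 u v w r s t (∑ d ∈ S, f d) := by
  classical
  induction S using Finset.induction with
  | empty => simp [Polar3]
  | insert _ _ hnotin ih =>
    rw [Finset.sum_insert hnotin]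
    have h1 := hf _ (Finset.mem_insert_self _ _)
    have h2 := ih fun d hd => hf d (Finset.mem_insert_of_mem hd)
    unfold Polar3 at h1 h2 ⊢
    simp only [map_add]
    rw [h1, h2]
    ring

lemma polar3 {Q : MvPolynomial (Fin 3) ℂ} (hQ : Q.IsHomogeneous 2) (u v w : Fin 3 → ℂ)
    (r s t : ℂ) :
    eval (r • u + s • v + t • w) Q =
      r ^ 2 * eval u Q + s ^ 2 * eval v Q + t ^ 2 * eval w Q
      + r * s * (eval (u + v) Q - eval u Q - eval v Q)
      + r * t * (eval (u + w) Q - eval u Q - eval w Q)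
      + s * t * (eval (v + w) Q - eval v Q - eval w Q) := by
  have key : ∀ d ∈ Q.support, Polar3 u v w r s t (monomial d (coeff d Q)) := by
    intro d hd
    have hdeg : Finsupp.degree d = 2 := by
      rw [Finsupp.degree_eq_weight_one]
      exact hQ (mem_support_iff.1 hd)
    obtain ⟨i, j, hm⟩ := monomial_deg2 hdeg (coeff d Q)
    unfold Polar3
    rw [hm]
    simp only [map_mul, eval_C, eval_X, Pi.add_apply, Pi.smul_apply, smul_eq_mul]
    ring
  have := polar3_aux u v w r s t Q.support (fun d => monomial d (coeff d Q)) key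
  unfold Polar3 at this
  rw [Q.as_sum]
  exact this


lemma restrict_eval {Q : MvPolynomial (Fin 3) ℂ} (hQ : Q.IsHomogeneous 2) (p q : Fin 3 → ℂ)
    (s u : ℂ) :
    eval (s • p + u • q) Q =
      eval p Q * s ^ 2 + (eval (p + q) Q - eval p Q - eval q Q) * (s * u) + eval q Q * u ^ 2 := by
  have h := polar3 hQ p q 0 s u 0
  rw [show s • p + u • q + (0:ℂ) • (0 : Fin 3 → ℂ) = s • p + u • q by simp] at h
  rw [h]
  ring

lemma tangent_iff {Q : MvPolynomial (Fin 3) ℂ} (hQ : Q.IsHomogeneous 2) (p q : Fin 3 → ℂ) :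
    TangentAlong p q Q ↔
      (¬(eval p Q = 0 ∧ eval (p + q) Q - eval p Q - eval q Q = 0 ∧ eval q Q = 0) ∧
       (eval (p + q) Q - eval p Q - eval q Q) ^ 2 = 4 * (eval p Q * eval q Q)) := by
  set A := eval p Q with hA'
  set C := eval q Q with hC'
  set B := eval (p + q) Q - eval p Q - eval q Q with hB'
  have hres : ∀ s u : ℂ, eval (s • p + u • q) Q = A * s ^ 2 + B * (s * u) + C * u ^ 2 :=
    fun s u => restrict_eval hQ p q s u
  constructor
  · rintro ⟨c, α, β, hc, hαβ, h⟩
    have e1 : A = c * α ^ 2 := by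
      have := (hres 1 0).symm.trans (h 1 0); linear_combination this
    have e2 : C = c * β ^ 2 := by
      have := (hres 0 1).symm.trans (h 0 1); linear_combination this
    have e3 : B = 2 * c * α * β := by
      have := (hres 1 1).symm.trans (h 1 1); linear_combination this - e1 - e2
    constructor
    · rintro ⟨h1, h2, h3⟩
      rcases hαβ with hα | hβ
      · exact (mul_ne_zero hc (pow_ne_zero 2 hα)) (e1 ▸ h1)
      · exact (mul_ne_zero hc (pow_ne_zero 2 hβ)) (e2 ▸ h3)
    · rw [e1, e2, e3]; ring
  · rintro ⟨hne, heq⟩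
    by_cases hA : A = 0
    · have hB : B = 0 := by
        have : B ^ 2 = 0 := by rw [heq, hA]; ring
        exact pow_eq_zero_iff two_ne_zero |>.1 this
      have hC : C ≠ 0 := fun h => hne ⟨hA, hB, h⟩
      exact ⟨C, 0, 1, hC, Or.inr one_ne_zero, fun s u => by rw [hres, hA, hB]; ring⟩
    · refine ⟨1 / (4 * A), 2 * A, B, by simp [hA], Or.inl (by simp [hA]), fun s u => ?_⟩
      rw [hres]
      field_simp
      linear_combination (-(u ^ 2)) * heq


lemma dot_add (c x y : Fin 3 → ℂ) : dot c (x + y) = dot c x + dot c y := by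
  simp [dot]; ring

lemma dot_cr_self1 (u v : Fin 3 → ℂ) : dot (cr u v) u = 0 := by simp [dot, cr]; ring
lemma dot_cr_self2 (u v : Fin 3 → ℂ) : dot (cr u v) v = 0 := by simp [dot, cr]; ring

lemma dot_lin2 (c x y : Fin 3 → ℂ) (α β : ℂ) :
    dot c (α • x + β • y) = α * dot c x + β * dot c y := by
  simp [dot]; ring

lemma cr_smul_right (x y : Fin 3 → ℂ) (t : ℂ) : cr x (t • y) = t • cr x y := by
  funext m; fin_cases m <;> simp [cr] <;> ring

lemma dot_cr_anti (u v w : Fin 3 → ℂ) : dot (cr u v) w = - dot (cr v u) w := by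
  simp [dot, cr]; ring

lemma perp_span {p q : Fin 3 → ℂ} (hpq : LinearIndependent ℂ ![p, q]) {c : Fin 3 → ℂ}
    (hc : c ≠ 0) (h1 : dot c p = 0) (h2 : dot c q = 0) {x : Fin 3 → ℂ} (hx : dot c x = 0) :
    ∃ s u : ℂ, x = s • p + u • q := by
  have hcr : cr c (cr p q) = 0 := by rw [id6, h1, h2]; simp
  obtain ⟨t, ht⟩ := cross_eq_zero hcr hc
  have hd : dot (cr p q) x = 0 := by
    rw [ht]
    have : dot (t • c) x = t * dot c x := by simp [dot]; ring
    rw [this, hx, mul_zero]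
  have hpq0 : cr p q ≠ 0 := by
    intro h0
    have hp : p ≠ 0 := by
      intro hp0
      have := li2 hpq (s := 1) (t := 0) (by simp [hp0])
      exact one_ne_zero this.1
    obtain ⟨t', ht'⟩ := cross_eq_zero h0 hp
    have : t' • p + (-1 : ℂ) • q = 0 := by rw [ht']; funext m; simp
    exact (by norm_num : (-1 : ℂ) ≠ 0) (li2 hpq this).2
  have hx' : cr p q 0 ≠ 0 ∨ cr p q 1 ≠ 0 ∨ cr p q 2 ≠ 0 := by
    by_contra hcon
    push_neg at hcon
    exact hpq0 (funext (fin3 hcon.1 hcon.2.1 hcon.2.2))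
  obtain ⟨e, hD⟩ : ∃ e : Fin 3 → ℂ, dot (cr p q) e ≠ 0 := by
    rcases hx' with h | h | h
    · exact ⟨![1, 0, 0], by simpa [dot] using h⟩
    · exact ⟨![0, 1, 0], by simpa [dot] using h⟩
    · exact ⟨![0, 0, 1], by simpa [dot] using h⟩
  have hc3 := cramer3 p q e x
  rw [show det3 p q x = 0 from hd, zero_smul, add_zero] at hc3
  refine ⟨det3 x q e / det3 p q e, det3 p x e / det3 p q e, funext fun m => ?_⟩
  have hm := congrFun hc3 m
  simp only [Pi.smul_apply, Pi.add_apply, smul_eq_mul] at hm ⊢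
  have hD' : det3 p q e ≠ 0 := hD
  field_simp
  linear_combination hm


end
end TT

set_option maxHeartbeats 1000000 in
open TT in
/-- Let `K` be four points of `ℙ²` in general position and `τ` a line disjoint from `K`.
Then exactly two members of the pencil of conics through `K` are tangent to `τ`; moreover
(the two tangent members coincide exactly when `τ` meets the base locus `K`, so) under the
disjointness hypothesis they are distinct, i.e. non-proportional. -/
theorem two_tangent_conics_in_pencil (a : Fin 4 → Fin 3 → ℂ)
    (hgen : ∀ i j k : Fin 4, i ≠ j → i ≠ k → j ≠ k → LinearIndependent ℂ ![a i, a j, a k])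
    (p q : Fin 3 → ℂ) (hpq : LinearIndependent ℂ ![p, q])
    (hdisj : ∀ (i : Fin 4) (s u : ℂ), a i ≠ s • p + u • q) :
    ∃ Q₁ Q₂ : MvPolynomial (Fin 3) ℂ,
      InConicPencil a Q₁ ∧ InConicPencil a Q₂ ∧
      TangentAlong p q Q₁ ∧ TangentAlong p q Q₂ ∧
      (∀ c : ℂ, Q₂ ≠ c • Q₁) ∧
      (∀ Q : MvPolynomial (Fin 3) ℂ, InConicPencil a Q → TangentAlong p q Q →
        (∃ c : ℂ, Q = c • Q₁) ∨ (∃ c : ℂ, Q = c • Q₂)) := by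
  classical
  have li3 : ∀ i j k : Fin 4, i ≠ j → i ≠ k → j ≠ k → det3 (a i) (a j) (a k) ≠ 0 :=
    fun i j k h1 h2 h3 => TT.li3_det (hgen i j k h1 h2 h3)
  have hcne : ∀ i j k : Fin 4, i ≠ j → i ≠ k → j ≠ k → cr (a i) (a j) ≠ 0 := by
    intro i j k h1 h2 h3 h0
    exact li3 i j k h1 h2 h3 (by simp only [det3, h0]; simp [dot])
  have hA : ∀ i j k : Fin 4, i ≠ j → i ≠ k → j ≠ k →
      ¬(dot (cr (a i) (a j)) p = 0 ∧ dot (cr (a i) (a j)) q = 0) := by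
    rintro i j k h1 h2 h3 ⟨hp0, hq0⟩
    obtain ⟨s, u, hsu⟩ := perp_span hpq (hcne i j k h1 h2 h3) hp0 hq0 (dot_cr_self1 (a i) (a j))
    exact hdisj i s u hsu
  have factor_ne : ∀ i j k : Fin 4, i ≠ j → i ≠ k → j ≠ k →
      dot (cr (a i) (a j)) p * dot (cr (a i) (a k)) q
        - dot (cr (a i) (a j)) q * dot (cr (a i) (a k)) p ≠ 0 := by
    intro i j k hij hik hjk hF
    have hx0ne : (dot (cr (a i) (a j)) q • p + (- dot (cr (a i) (a j)) p) • q) ≠ 0 := by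
      intro h0
      have := li2 hpq h0
      exact hA i j k hij hik hjk ⟨neg_eq_zero.mp this.2, this.1⟩
    have hd1 : dot (cr (a i) (a j))
        (dot (cr (a i) (a j)) q • p + (- dot (cr (a i) (a j)) p) • q) = 0 := by
      rw [dot_lin2]; ring
    have hd2 : dot (cr (a i) (a k))
        (dot (cr (a i) (a j)) q • p + (- dot (cr (a i) (a j)) p) • q) = 0 := by
      rw [dot_lin2]; linear_combination -hF
    have hz : cr (dot (cr (a i) (a j)) q • p + (- dot (cr (a i) (a j)) p) • q)
        (cr (cr (a i) (a j)) (cr (a i) (a k))) = 0 := by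
      rw [id6, dot_comm _ (cr (a i) (a k)), hd2, dot_comm _ (cr (a i) (a j)), hd1]; simp
    rw [id7, cr_smul_right] at hz
    have hz2 : cr (dot (cr (a i) (a j)) q • p + (- dot (cr (a i) (a j)) p) • q) (a i) = 0 :=
      (smul_eq_zero.1 hz).resolve_left (li3 i j k hij hik hjk)
    obtain ⟨t, ht⟩ := cross_eq_zero hz2 hx0ne
    refine hdisj i (t * dot (cr (a i) (a j)) q) (t * (- dot (cr (a i) (a j)) p)) ?_
    conv_lhs => rw [ht]
    funext m; simp; ring
  -- the two degenerate conics
  set K1 : MvPolynomial (Fin 3) ℂ := TT.lin (cr (a 0) (a 1)) * TT.lin (cr (a 2) (a 3)) with hK1def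
  set K2 : MvPolynomial (Fin 3) ℂ := TT.lin (cr (a 0) (a 2)) * TT.lin (cr (a 1) (a 3)) with hK2def
  have hevalK1 : ∀ x, eval x K1 = dot (cr (a 0) (a 1)) x * dot (cr (a 2) (a 3)) x := by
    intro x; rw [hK1def, map_mul, eval_lin, eval_lin]
  have hevalK2 : ∀ x, eval x K2 = dot (cr (a 0) (a 2)) x * dot (cr (a 1) (a 3)) x := by
    intro x; rw [hK2def, map_mul, eval_lin, eval_lin]
  have hK1hom : K1.IsHomogeneous 2 := by
    rw [hK1def]
    exact (by norm_num : (1:ℕ) + 1 = 2) ▸ (lin_homog _).mul (lin_homog _)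
  have hK2hom : K2.IsHomogeneous 2 := by
    rw [hK2def]
    exact (by norm_num : (1:ℕ) + 1 = 2) ▸ (lin_homog _).mul (lin_homog _)
  have hK1mem : InConicPencil a K1 := by
    refine ⟨hK1hom, TT.fin4 ?_ ?_ ?_ ?_⟩ <;> rw [hevalK1]
    · rw [dot_cr_self1 (a 0) (a 1)]; ring
    · rw [dot_cr_self2 (a 0) (a 1)]; ring
    · rw [dot_cr_self1 (a 2) (a 3)]; ring
    · rw [dot_cr_self2 (a 2) (a 3)]; ring
  have hK2mem : InConicPencil a K2 := by
    refine ⟨hK2hom, TT.fin4 ?_ ?_ ?_ ?_⟩ <;> rw [hevalK2]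
    · rw [dot_cr_self1 (a 0) (a 2)]; ring
    · rw [dot_cr_self1 (a 1) (a 3)]; ring
    · rw [dot_cr_self2 (a 0) (a 2)]; ring
    · rw [dot_cr_self2 (a 1) (a 3)]; ring
  have hmemcomb : ∀ lam mu : ℂ, InConicPencil a (lam • K1 + mu • K2) := by
    intro lam mu
    refine ⟨Submodule.add_mem _ (Submodule.smul_mem _ _ hK1mem.1)
      (Submodule.smul_mem _ _ hK2mem.1), fun i => ?_⟩
    rw [map_add, smul_eval, smul_eval, hK1mem.2 i, hK2mem.2 i]; ring
  -- value formula
  have hD0 : det3 (a 0) (a 1) (a 2) ≠ 0 := li3 0 1 2 (by decide) (by decide) (by decide)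
  have val_formula : ∀ Q : MvPolynomial (Fin 3) ℂ, Q.IsHomogeneous 2 →
      eval (a 0) Q = 0 → eval (a 1) Q = 0 → eval (a 2) Q = 0 → ∀ x : Fin 3 → ℂ,
      eval x Q = (det3 x (a 1) (a 2) * det3 (a 0) x (a 2) * eval (a 0 + a 1) Q
        + det3 x (a 1) (a 2) * det3 (a 0) (a 1) x * eval (a 0 + a 2) Q
        + det3 (a 0) x (a 2) * det3 (a 0) (a 1) x * eval (a 1 + a 2) Q)
        / det3 (a 0) (a 1) (a 2) ^ 2 := by
    intro Q hQ h0 h1 h2 x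
    have hx : x = (det3 x (a 1) (a 2) / det3 (a 0) (a 1) (a 2)) • a 0
        + (det3 (a 0) x (a 2) / det3 (a 0) (a 1) (a 2)) • a 1
        + (det3 (a 0) (a 1) x / det3 (a 0) (a 1) (a 2)) • a 2 := by
      have hc := cramer3 (a 0) (a 1) (a 2) x
      funext m
      have hm := congrFun hc m
      simp only [Pi.smul_apply, Pi.add_apply, smul_eq_mul] at hm ⊢
      field_simp
      linear_combination hm
    rw [eq_div_iff (pow_ne_zero 2 hD0)]
    conv_lhs => rw [hx]
    rw [polar3 hQ, h0, h1, h2]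
    field_simp
    try ring
    try exact Or.inl trivial
  have constraint : ∀ Q : MvPolynomial (Fin 3) ℂ, Q.IsHomogeneous 2 →
      (∀ i, eval (a i) Q = 0) →
      det3 (a 3) (a 1) (a 2) * det3 (a 0) (a 3) (a 2) * eval (a 0 + a 1) Q + det3 (a 3) (a 1) (a 2) * det3 (a 0) (a 1) (a 3) * eval (a 0 + a 2) Q
        + det3 (a 0) (a 3) (a 2) * det3 (a 0) (a 1) (a 3) * eval (a 1 + a 2) Q = 0 := by
    intro Q hQ hv
    have h := val_formula Q hQ (hv 0) (hv 1) (hv 2) (a 3)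
    rw [hv 3] at h
    field_simp at h
    linear_combination -h
  -- b-values of K1, K2
  have hb01K1 : eval (a 0 + a 1) K1 = 0 := by
    rw [hevalK1, dot_add, dot_cr_self1 (a 0) (a 1), dot_cr_self2 (a 0) (a 1)]; ring
  have hb02K2 : eval (a 0 + a 2) K2 = 0 := by
    rw [hevalK2, dot_add, dot_cr_self1 (a 0) (a 2), dot_cr_self2 (a 0) (a 2)]; ring
  have hb02K1 : eval (a 0 + a 2) K1 = dot (cr (a 0) (a 1)) (a 2) * dot (cr (a 2) (a 3)) (a 0) := by
    rw [hevalK1, dot_add, dot_add, dot_cr_self1 (a 0) (a 1), dot_cr_self1 (a 2) (a 3)]; ring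
  have hb01K2 : eval (a 0 + a 1) K2 = dot (cr (a 0) (a 2)) (a 1) * dot (cr (a 1) (a 3)) (a 0) := by
    rw [hevalK2, dot_add, dot_add, dot_cr_self1 (a 0) (a 2), dot_cr_self1 (a 1) (a 3)]; ring
  have he1ne : eval (a 0 + a 2) K1 ≠ 0 := by
    rw [hb02K1]
    exact mul_ne_zero (li3 0 1 2 (by decide) (by decide) (by decide))
      (li3 2 3 0 (by decide) (by decide) (by decide))
  have hd2ne : eval (a 0 + a 1) K2 ≠ 0 := by
    rw [hb01K2]
    exact mul_ne_zero (li3 0 2 1 (by decide) (by decide) (by decide))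
      (li3 1 3 0 (by decide) (by decide) (by decide))
  have hXP : det3 (a 3) (a 1) (a 2) ≠ 0 := li3 3 1 2 (by decide) (by decide) (by decide)
  have hYP : det3 (a 0) (a 3) (a 2) ≠ 0 := li3 0 3 2 (by decide) (by decide) (by decide)
  have hZP : det3 (a 0) (a 1) (a 3) ≠ 0 := li3 0 1 3 (by decide) (by decide) (by decide)
  -- the pencil is spanned by K1 and K2
  have hspan : ∀ Q : MvPolynomial (Fin 3) ℂ, InConicPencil a Q →
      ∃ lam mu : ℂ, Q = lam • K1 + mu • K2 := by
    rintro Q ⟨hmem, hvan⟩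
    have hQh : Q.IsHomogeneous 2 := hmem
    refine ⟨eval (a 0 + a 2) Q / eval (a 0 + a 2) K1, eval (a 0 + a 1) Q / eval (a 0 + a 1) K2,
      MvPolynomial.funext fun x => ?_⟩
    have cQ := constraint Q hQh hvan
    have cK1 := constraint K1 hK1hom hK1mem.2
    have cK2 := constraint K2 hK2hom hK2mem.2
    rw [hb01K1] at cK1
    rw [hb02K2] at cK2
    have hrel5 : eval (a 1 + a 2) Q * (eval (a 0 + a 2) K1 * eval (a 0 + a 1) K2)
        = eval (a 0 + a 2) Q * eval (a 0 + a 1) K2 * eval (a 1 + a 2) K1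
          + eval (a 0 + a 1) Q * eval (a 0 + a 2) K1 * eval (a 1 + a 2) K2 := by
      apply mul_left_cancel₀ (mul_ne_zero hYP hZP)
      linear_combination eval (a 0 + a 2) K1 * eval (a 0 + a 1) K2 * cQ
        - eval (a 0 + a 2) Q * eval (a 0 + a 1) K2 * cK1
        - eval (a 0 + a 1) Q * eval (a 0 + a 2) K1 * cK2
    have hQx := val_formula Q hQh (hvan 0) (hvan 1) (hvan 2) x
    have hK1x := val_formula K1 hK1hom (hK1mem.2 0) (hK1mem.2 1) (hK1mem.2 2) x
    have hK2x := val_formula K2 hK2hom (hK2mem.2 0) (hK2mem.2 1) (hK2mem.2 2) x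
    rw [map_add, smul_eval, smul_eval, hQx, hK1x, hK2x, hb01K1, hb02K2]
    field_simp
    linear_combination (det3 (a 0) x (a 2) * det3 (a 0) (a 1) x) * hrel5
  -- tangency coefficients
  set ka : ℂ := (dot (cr (a 0) (a 1)) p * dot (cr (a 2) (a 3)) q - dot (cr (a 0) (a 1)) q * dot (cr (a 2) (a 3)) p) ^ 2 with hka
  set kc : ℂ := (dot (cr (a 0) (a 2)) p * dot (cr (a 1) (a 3)) q - dot (cr (a 0) (a 2)) q * dot (cr (a 1) (a 3)) p) ^ 2 with hkc
  set kb : ℂ := 2 * ((dot (cr (a 0) (a 1)) p * dot (cr (a 2) (a 3)) q + dot (cr (a 0) (a 1)) q * dot (cr (a 2) (a 3)) p) * (dot (cr (a 0) (a 2)) p * dot (cr (a 1) (a 3)) q + dot (cr (a 0) (a 2)) q * dot (cr (a 1) (a 3)) p)) - 4 * ((dot (cr (a 0) (a 1)) p * dot (cr (a 2) (a 3)) p) * (dot (cr (a 0) (a 2)) q * dot (cr (a 1) (a 3)) q) + (dot (cr (a 0) (a 2)) p * dot (cr (a 1) (a 3)) p) * (dot (cr (a 0) (a 1)) q * dot (cr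 (a 2) (a 3)) q)) with hkb
  have hF1 : (dot (cr (a 0) (a 1)) p * dot (cr (a 0) (a 2)) q - dot (cr (a 0) (a 1)) q * dot (cr (a 0) (a 2)) p) ≠ 0 := factor_ne 0 1 2 (by decide) (by decide) (by decide)
  have hF2 : (dot (cr (a 0) (a 1)) p * dot (cr (a 1) (a 3)) q - dot (cr (a 0) (a 1)) q * dot (cr (a 1) (a 3)) p) ≠ 0 := by
    have h' := factor_ne 1 0 3 (by decide) (by decide) (by decide)
    rw [dot_cr_anti (a 1) (a 0) p, dot_cr_anti (a 1) (a 0) q] at h'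
    intro h; exact h' (by linear_combination -h)
  have hF3 : (dot (cr (a 2) (a 3)) p * dot (cr (a 0) (a 2)) q - dot (cr (a 2) (a 3)) q * dot (cr (a 0) (a 2)) p) ≠ 0 := by
    have h' := factor_ne 2 3 0 (by decide) (by decide) (by decide)
    rw [dot_cr_anti (a 2) (a 0) p, dot_cr_anti (a 2) (a 0) q] at h'
    intro h; exact h' (by linear_combination -h)
  have hF4 : (dot (cr (a 2) (a 3)) p * dot (cr (a 1) (a 3)) q - dot (cr (a 2) (a 3)) q * dot (cr (a 1) (a 3)) p) ≠ 0 := by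
    have h' := factor_ne 3 2 1 (by decide) (by decide) (by decide)
    rw [dot_cr_anti (a 3) (a 2) p, dot_cr_anti (a 3) (a 2) q,
      dot_cr_anti (a 3) (a 1) p, dot_cr_anti (a 3) (a 1) q] at h'
    intro h; exact h' (by linear_combination h)
  have hdiscne : kb ^ 2 - 4 * ka * kc ≠ 0 := by
    rw [hka, hkb, hkc]
    have : (2 * ((dot (cr (a 0) (a 1)) p * dot (cr (a 2) (a 3)) q + dot (cr (a 0) (a 1)) q * dot (cr (a 2) (a 3)) p) * (dot (cr (a 0) (a 2)) p * dot (cr (a 1) (a 3)) q + dot (cr (a 0) (a 2)) q * dot (cr (a 1) (a 3)) p)) - 4 * ((dot (cr (a 0) (a 1)) p * dot (cr (a 2) (a 3)) p) * (dot (cr (a 0) (a 2)) q * dot (cr (a 1) (a 3)) q) + (dot (cr (a 0) (a 2)) p * dot (cr (a 1) (a 3)) p) * (dot (cr (a 0) (a 1)) q * dot (cr (a 2) (a 3)) q))) ^ 2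
        - 4 * (dot (cr (a 0) (a 1)) p * dot (cr (a 2) (a 3)) q - dot (cr (a 0) (a 1)) q * dot (cr (a 2) (a 3)) p) ^ 2 * (dot (cr (a 0) (a 2)) p * dot (cr (a 1) (a 3)) q - dot (cr (a 0) (a 2)) q * dot (cr (a 1) (a 3)) p) ^ 2
        = 16 * ((dot (cr (a 0) (a 1)) p * dot (cr (a 0) (a 2)) q - dot (cr (a 0) (a 1)) q * dot (cr (a 0) (a 2)) p) * ((dot (cr (a 0) (a 1)) p * dot (cr (a 1) (a 3)) q - dot (cr (a 0) (a 1)) q * dot (cr (a 1) (a 3)) p) * ((dot (cr (a 2) (a 3)) p * dot (cr (a 0) (a 2)) q - dot (cr (a 2) (a 3)) q * dot (cr (a 0) (a 2)) p) * (dot (cr (a 2) (a 3)) p * dot (cr (a 1) (a 3)) q - dot (cr (a 2) (a 3)) q * dot (cr (a 1) (a 3)) p)))) := by ring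
    rw [this]
    exact mul_ne_zero (by norm_num)
      (mul_ne_zero hF1 (mul_ne_zero hF2 (mul_ne_zero hF3 hF4)))
  -- independence of restricted forms
  have hv : ∀ lam mu : ℂ,
      lam * (dot (cr (a 0) (a 1)) p * dot (cr (a 2) (a 3)) p) + mu * (dot (cr (a 0) (a 2)) p * dot (cr (a 1) (a 3)) p) = 0 → lam * (dot (cr (a 0) (a 1)) p * dot (cr (a 2) (a 3)) q + dot (cr (a 0) (a 1)) q * dot (cr (a 2) (a 3)) p) + mu * (dot (cr (a 0) (a 2)) p * dot (cr (a 1) (a 3)) q + dot (cr (a 0) (a 2)) q * dot (cr (a 1) (a 3)) p) = 0 →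
      lam * (dot (cr (a 0) (a 1)) q * dot (cr (a 2) (a 3)) q) + mu * (dot (cr (a 0) (a 2)) q * dot (cr (a 1) (a 3)) q) = 0 → lam = 0 ∧ mu = 0 := by
    intro lam mu h1 h2 h3
    constructor
    · have h4 : lam * ((dot (cr (a 0) (a 1)) p * dot (cr (a 0) (a 2)) q - dot (cr (a 0) (a 1)) q * dot (cr (a 0) (a 2)) p) * (dot (cr (a 2) (a 3)) p * dot (cr (a 0) (a 2)) q - dot (cr (a 2) (a 3)) q * dot (cr (a 0) (a 2)) p)) = 0 := by
        linear_combination dot (cr (a 0) (a 2)) q ^ 2 * h1 - dot (cr (a 0) (a 2)) p * dot (cr (a 0) (a 2)) q * h2 + dot (cr (a 0) (a 2)) p ^ 2 * h3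
      exact (mul_eq_zero.1 h4).resolve_right (mul_ne_zero hF1 hF3)
    · have h4 : mu * ((dot (cr (a 0) (a 1)) p * dot (cr (a 0) (a 2)) q - dot (cr (a 0) (a 1)) q * dot (cr (a 0) (a 2)) p) * (dot (cr (a 0) (a 1)) p * dot (cr (a 1) (a 3)) q - dot (cr (a 0) (a 1)) q * dot (cr (a 1) (a 3)) p)) = 0 := by
        linear_combination dot (cr (a 0) (a 1)) q ^ 2 * h1 - dot (cr (a 0) (a 1)) p * dot (cr (a 0) (a 1)) q * h2 + dot (cr (a 0) (a 1)) p ^ 2 * h3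
      exact (mul_eq_zero.1 h4).resolve_right (mul_ne_zero hF1 hF2)
  -- roots of the discriminant quadratic
  obtain ⟨l1, m1, l2, m2, hr1, hr2, hdet12, hcompl⟩ : ∃ l1 m1 l2 m2 : ℂ,
      ka * l1 ^ 2 + kb * (l1 * m1) + kc * m1 ^ 2 = 0 ∧
      ka * l2 ^ 2 + kb * (l2 * m2) + kc * m2 ^ 2 = 0 ∧
      l1 * m2 - l2 * m1 ≠ 0 ∧
      ∀ lam mu : ℂ, ka * lam ^ 2 + kb * (lam * mu) + kc * mu ^ 2 = 0 →
        (∃ t : ℂ, lam = t * l1 ∧ mu = t * m1) ∨ (∃ t : ℂ, lam = t * l2 ∧ mu = t * m2) := by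
    by_cases haz : ka = 0
    · have hb0 : kb ≠ 0 := by
        intro h; exact hdiscne (by rw [haz, h]; ring)
      refine ⟨1, 0, -kc, kb, by rw [haz]; ring, by rw [haz]; ring, by simpa using hb0, ?_⟩
      intro lam mu h
      rcases mul_eq_zero.1 (show mu * (kb * lam + kc * mu) = 0 by
          rw [haz] at h; linear_combination h) with h' | h'
      · exact Or.inl ⟨lam, by ring, by rw [h']; ring⟩
      · refine Or.inr ⟨mu / kb, ?_, by field_simp⟩
        field_simp
        linear_combination h'
    · obtain ⟨e, he⟩ := IsAlgClosed.exists_pow_nat_eq (kb ^ 2 - 4 * ka * kc) (n := 2) (by norm_num)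
      have hene : e ≠ 0 := by
        intro h; exact hdiscne (by rw [← he, h]; ring)
      refine ⟨-kb + e, 2 * ka, -kb - e, 2 * ka,
        by linear_combination ka * he, by linear_combination ka * he, ?_, ?_⟩
      · intro h
        have h4 : (4 : ℂ) * ka * e = 0 := by linear_combination h
        rcases mul_eq_zero.1 h4 with h' | h'
        · rcases mul_eq_zero.1 h' with h'' | h''
          · norm_num at h''
          · exact haz h''
        · exact hene h'
      · intro lam mu h
        have hfac : (2 * ka * lam + (kb - e) * mu) * (2 * ka * lam + (kb + e) * mu) = 0 := by
          linear_combination 4 * ka * h - mu ^ 2 * he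
        rcases mul_eq_zero.1 hfac with h' | h'
        · refine Or.inl ⟨mu / (2 * ka), ?_, by field_simp⟩
          field_simp
          linear_combination h'
        · refine Or.inr ⟨mu / (2 * ka), ?_, by field_simp⟩
          field_simp
          linear_combination h'
  -- tangency of pencil members in terms of (lam, mu)
  have hevcomb : ∀ (lam mu : ℂ) (x : Fin 3 → ℂ), eval x (lam • K1 + mu • K2)
      = lam * eval x K1 + mu * eval x K2 := by
    intro lam mu x; rw [map_add, smul_eval, smul_eval]
  have htan : ∀ lam mu : ℂ, ¬(lam = 0 ∧ mu = 0) →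
      (ka * lam ^ 2 + kb * (lam * mu) + kc * mu ^ 2 = 0 ↔
        TangentAlong p q (lam • K1 + mu • K2)) := by
    intro lam mu hne
    rw [TT.tangent_iff (hmemcomb lam mu).1 p q]
    rw [hevcomb, hevcomb, hevcomb, hevalK1 p, hevalK1 q, hevalK1 (p + q),
      hevalK2 p, hevalK2 q, hevalK2 (p + q), dot_add, dot_add, dot_add, dot_add]
    constructor
    · intro hroot
      constructor
      · rintro ⟨h1, h2, h3⟩
        exact hne (hv lam mu (by linear_combination h1) (by linear_combination h2)
          (by linear_combination h3))
      · rw [hka, hkb, hkc] at hroot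
        linear_combination hroot
    · rintro ⟨hne0, heq⟩
      rw [hka, hkb, hkc]
      linear_combination heq
  have hne1 : ¬(l1 = 0 ∧ m1 = 0) := by
    rintro ⟨h1, h2⟩; exact hdet12 (by rw [h1, h2]; ring)
  have hne2 : ¬(l2 = 0 ∧ m2 = 0) := by
    rintro ⟨h1, h2⟩; exact hdet12 (by rw [h1, h2]; ring)
  refine ⟨l1 • K1 + m1 • K2, l2 • K1 + m2 • K2, hmemcomb l1 m1, hmemcomb l2 m2,
    (htan l1 m1 hne1).1 hr1, (htan l2 m2 hne2).1 hr2, ?_, ?_⟩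
  · -- non-proportionality
    intro cc hcc
    have h1 := congrArg (eval (a 0 + a 2)) hcc
    have h2 := congrArg (eval (a 0 + a 1)) hcc
    rw [hevcomb, smul_eval, hevcomb, hb02K2] at h1
    rw [hevcomb, smul_eval, hevcomb, hb01K1] at h2
    have hl : l2 = cc * l1 := by
      have := mul_right_cancel₀ he1ne (show l2 * eval (a 0 + a 2) K1
          = cc * l1 * eval (a 0 + a 2) K1 by linear_combination h1)
      exact this
    have hm : m2 = cc * m1 := by
      have := mul_right_cancel₀ hd2ne (show m2 * eval (a 0 + a 1) K2
          = cc * m1 * eval (a 0 + a 1) K2 by linear_combination h2)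
      exact this
    exact hdet12 (by rw [hl, hm]; ring)
  · -- completeness
    intro Q hQpen hQtan
    obtain ⟨lam, mu, rfl⟩ := hspan Q hQpen
    by_cases hne : lam = 0 ∧ mu = 0
    · exact Or.inl ⟨0, by rw [hne.1, hne.2]; module⟩
    · have hroot := (htan lam mu hne).2 hQtan
      rcases hcompl lam mu hroot with ⟨t, ht1, ht2⟩ | ⟨t, ht1, ht2⟩
      · exact Or.inl ⟨t, by rw [ht1, ht2]; module⟩
      · exact Or.inr ⟨t, by rw [ht1, ht2]; module⟩
end
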